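/- Let I be a school matching instance and let a,ā∈A be distinct students such that M_0(a)≠M_0(ā) and M_z(a)≠M_z(ā), where M_0 and M_z are the student-optimal and student-pessimal stable matchings. Then for every school b∈B, exactly one of the following holds: (1) there is no stable matching M∈S(I) with M(a)=M(ā)=b; (2) there exists a unique pair of rotations ρ_in, ρ_out ∈ R(I) such that for every M∈S(I), M(a)=M(ā)=b if and only if ρ_in∈R_M and ρ_out∉R_M; moreover, in case (2), ρ_in ▷ ρ_out in the rotation poset. -/

import Mathlib

open Classical
open scoped ENNReal

noncomputable section

namespace SM

/-- A school matching instance: students `A`, schools `B`, strict preference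
orders over the other side plus the outside option `∅` (encoded as `none`),
and quotas `q b ≤ |A|`. -/
structure SchoolInstance (A B : Type) [Fintype A] [Fintype B] where
  prefA : A → Option B → Option B → Prop
  prefB : B → Option A → Option A → Prop
  prefA_sto : ∀ a, IsStrictTotalOrder (Option B) (prefA a)
  prefB_sto : ∀ b, IsStrictTotalOrder (Option A) (prefB b)
  q : B → ℕ
  q_le : ∀ b, q b ≤ Fintype.card A

variable {A B : Type} [Fintype A] [Fintype B] [DecidableEq A] [DecidableEq B]

/-- A matching: every student is assigned a school or the outside option, and
each school receives at most `q b` students.  (A school is implicitly paired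
with the outside option exactly when it has strictly fewer than `q b`
students, and a student is paired with the outside option exactly when it has
no school; this determines the set of pairs of the matching.) -/
structure Matching {A B : Type} [Fintype A] [Fintype B] (I : SchoolInstance A B) where
  toFun : A → Option B
  quota : ∀ b : B, (Finset.univ.filter fun a => toFun a = some b).card ≤ I.q b

instance (I : SchoolInstance A B) : Nonempty (Matching I) := by
  refine ⟨⟨fun _ => none, fun b => ?_⟩⟩
  have h : (Finset.univ.filter fun _ : A => (none : Option B) = some b) = ∅ :=
    Finset.filter_false_of_mem (by intro a _; simp)
  rw [h, Finset.card_empty]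
  exact Nat.zero_le _

/-- The students assigned to school `b`. -/
def assignedTo (I : SchoolInstance A B) (M : Matching I) (b : B) : Finset A :=
  Finset.univ.filter fun a => M.toFun a = some b

/-- School `b` has strictly fewer than `q b` students, i.e. is also paired
with the outside option. -/
def hasSlack (I : SchoolInstance A B) (M : Matching I) (b : B) : Prop :=
  (assignedTo I M b).card < I.q b

/-- `x ∈ M(b)`: the partners of school `b` (students assigned to it, plus the
outside option when it is under quota). -/
def inPartners (I : SchoolInstance A B) (M : Matching I) (b : B) (x : Option A) : Prop :=
  (∃ a : A, x = some a ∧ M.toFun a = some b) ∨ (x = none ∧ hasSlack I M b)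

/-- `M(b)` as a set. -/
def partnersSet (I : SchoolInstance A B) (M : Matching I) (b : B) : Set (Option A) :=
  {x | inPartners I M b x}

/-- The pair `ab` blocks `M`. -/
def BlocksPair (I : SchoolInstance A B) (M : Matching I) (a : A) (b : B) : Prop :=
  I.prefA a (some b) (M.toFun a) ∧ ∃ x, inPartners I M b x ∧ I.prefB b (some a) x

/-- Student `a` blocks `M` (prefers the outside option to its partner). -/
def BlocksStudent (I : SchoolInstance A B) (M : Matching I) (a : A) : Prop :=
  I.prefA a none (M.toFun a)

/-- School `b` blocks `M` (prefers the outside option to one of its partners). -/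
def BlocksSchool (I : SchoolInstance A B) (M : Matching I) (b : B) : Prop :=
  ∃ a : A, M.toFun a = some b ∧ I.prefB b none (some a)

/-- Stability: no blocking pair and no blocking agent. -/
def Stable (I : SchoolInstance A B) (M : Matching I) : Prop :=
  (¬ ∃ a b, BlocksPair I M a b) ∧ (¬ ∃ a, BlocksStudent I M a) ∧ (¬ ∃ b, BlocksSchool I M b)

/-- `M ≥ M'`: every student weakly prefers `M` to `M'`. -/
def matGE (I : SchoolInstance A B) (M M' : Matching I) : Prop :=
  ∀ a : A, M.toFun a = M'.toFun a ∨ I.prefA a (M.toFun a) (M'.toFun a)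

/-- `M' < M` in the student order. -/
def matLT (I : SchoolInstance A B) (M' M : Matching I) : Prop :=
  matGE I M M' ∧ M'.toFun ≠ M.toFun

/-- `M'` is an immediate predecessor of `M` in `(S(I), ≥)`. -/
def ImmPred (I : SchoolInstance A B) (M' M : Matching I) : Prop :=
  Stable I M' ∧ Stable I M ∧ matLT I M' M ∧
    ¬ ∃ M'' : Matching I, Stable I M'' ∧ matLT I M' M'' ∧ matLT I M'' M

/-- The type in which rotations live: pairs `(ρ₊, ρ₋)` of sets of
student/school pairs (with the outside option allowed on either side). -/
abbrev Rot (A B : Type) : Type :=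
  Finset (Option A × Option B) × Finset (Option A × Option B)

/-- The set of pairs of a matching: each student with its partner, and each
under-quota school with the outside option. -/
def pairsOf (I : SchoolInstance A B) (M : Matching I) : Finset (Option A × Option B) :=
  Finset.univ.filter fun p =>
    (∃ a : A, p = (some a, M.toFun a)) ∨ (∃ b : B, hasSlack I M b ∧ p = (none, some b))

/-- The rotation `ρ(M, M') = (M ∖ M', M' ∖ M)`. -/
def rho (I : SchoolInstance A B) (M M' : Matching I) : Rot A B :=
  (pairsOf I M \ pairsOf I M', pairsOf I M' \ pairsOf I M)

/-- `R(I)`: the set of all rotations of `I`. -/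
def RotSet (I : SchoolInstance A B) : Set (Rot A B) :=
  {r | ∃ M M' : Matching I, ImmPred I M' M ∧ r = rho I M M'}

/-- `c` is a maximal chain of stable matchings from `M0` down to `M`:
consecutive entries are immediate predecessors. -/
def chainTo (I : SchoolInstance A B) (M0 M : Matching I) (c : List (Matching I)) : Prop :=
  c.head? = some M0 ∧ c.getLast? = some M ∧ (∀ N ∈ c, Stable I N) ∧
    List.Chain' (fun X Y => ImmPred I Y X) c

/-- The set of rotations eliminated along the chain `c`. -/
def chainRots (I : SchoolInstance A B) (c : List (Matching I)) : Set (Rot A B) :=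
  {r | ∃ (i : ℕ) (X Y : Matching I), getElem? c i = some X ∧ getElem? c (i + 1) = some Y ∧ r = rho I X Y}

/-- `ρ` is exposed in `M`. -/
def Exposed (I : SchoolInstance A B) (r : Rot A B) (M : Matching I) : Prop :=
  ∃ M', ImmPred I M' M ∧ r = rho I M M'

/-- The rotation poset `ρ ⊵ ρ'` (relative to the rotation-set map `RM`):
either `ρ = ρ'`, or `ρ ∈ R_M` for every stable `M` in which `ρ'` is exposed. -/
def domRel (I : SchoolInstance A B) (RM : Matching I → Set (Rot A B)) (r r' : Rot A B) : Prop :=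
  r = r' ∨ ∀ M, Stable I M → Exposed I r' M → r ∈ RM M

/-- `ρ ▷ ρ'`. -/
def strictDom (I : SchoolInstance A B) (RM : Matching I → Set (Rot A B)) (r r' : Rot A B) : Prop :=
  domRel I RM r r' ∧ r ≠ r'

/-- `R ⊆ R(I)` is upper-closed in the rotation poset. -/
def UpperClosed (I : SchoolInstance A B) (RM : Matching I → Set (Rot A B))
    (R : Set (Rot A B)) : Prop :=
  R ⊆ RotSet I ∧ ∀ r' ∈ R, ∀ r ∈ RotSet I, domRel I RM r r' → r ∈ R

/-- `N` is the join `M ∨ M'` (least upper bound) in `(S(I), ≥)`. -/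
def IsJoin (I : SchoolInstance A B) (M M' N : Matching I) : Prop :=
  Stable I N ∧ matGE I N M ∧ matGE I N M' ∧
    ∀ P, Stable I P → matGE I P M → matGE I P M' → matGE I P N

/-- `N` is the meet `M ∧ M'` (greatest lower bound) in `(S(I), ≥)`. -/
def IsMeet (I : SchoolInstance A B) (M M' N : Matching I) : Prop :=
  Stable I N ∧ matGE I M N ∧ matGE I M' N ∧
    ∀ P, Stable I P → matGE I M P → matGE I M' P → matGE I N P

/-- `F` is a (nonempty) sublattice of the lattice of stable matchings. -/
def IsSublattice (I : SchoolInstance A B) (F : Set (Matching I)) : Prop :=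
  F.Nonempty ∧ (∀ M ∈ F, Stable I M) ∧
    (∀ M ∈ F, ∀ M' ∈ F, ∃ N ∈ F, IsJoin I M M' N) ∧
    (∀ M ∈ F, ∀ M' ∈ F, ∃ N ∈ F, IsMeet I M M' N)

/-- `ρ ~ ρ'`: the two rotations are eliminated together in every matching of `F`. -/
def rotEquiv (I : SchoolInstance A B) (RM : Matching I → Set (Rot A B))
    (F : Set (Matching I)) (r r' : Rot A B) : Prop :=
  ∀ M ∈ F, (r ∈ RM M ↔ r' ∈ RM M)

/-- The trivial meta-rotation `θ₀^F` of rotations eliminated in every matching of `F`. -/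
def theta0 (I : SchoolInstance A B) (RM : Matching I → Set (Rot A B))
    (F : Set (Matching I)) : Set (Rot A B) :=
  {r | r ∈ RotSet I ∧ ∀ M ∈ F, r ∈ RM M}

/-- The trivial meta-rotation `θ_z^F` of rotations eliminated in no matching of `F`. -/
def thetaZ (I : SchoolInstance A B) (RM : Matching I → Set (Rot A B))
    (F : Set (Matching I)) : Set (Rot A B) :=
  {r | r ∈ RotSet I ∧ ∀ M ∈ F, r ∉ RM M}

/-- `θ` is a meta-rotation of `F` (an equivalence class of `~`). -/
def IsMetaRot (I : SchoolInstance A B) (RM : Matching I → Set (Rot A B))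
    (F : Set (Matching I)) (θ : Set (Rot A B)) : Prop :=
  ∃ r ∈ RotSet I, θ = {r' | r' ∈ RotSet I ∧ rotEquiv I RM F r r'}

/-- `θ` is a proper meta-rotation of `F`. -/
def IsProperMeta (I : SchoolInstance A B) (RM : Matching I → Set (Rot A B))
    (F : Set (Matching I)) (θ : Set (Rot A B)) : Prop :=
  IsMetaRot I RM F θ ∧ θ ≠ theta0 I RM F ∧ θ ≠ thetaZ I RM F

/-- `θ ⊵^F θ'` on (proper) meta-rotations. -/
def metaDom (I : SchoolInstance A B) (RM : Matching I → Set (Rot A B))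
    (F : Set (Matching I)) (θ θ' : Set (Rot A B)) : Prop :=
  ∀ M ∈ F, θ' ⊆ RM M → θ ⊆ RM M

/-- `Θ_M`: the set of proper meta-rotations contained in `R_M`. -/
def ThetaM (I : SchoolInstance A B) (RM : Matching I → Set (Rot A B))
    (F : Set (Matching I)) (M : Matching I) : Set (Set (Rot A B)) :=
  {θ | IsProperMeta I RM F θ ∧ θ ⊆ RM M}

/-- `Θ` is an upper-closed set of proper meta-rotations. -/
def UCProper (I : SchoolInstance A B) (RM : Matching I → Set (Rot A B))
    (F : Set (Matching I)) (Θ : Set (Set (Rot A B))) : Prop :=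
  (∀ θ ∈ Θ, IsProperMeta I RM F θ) ∧
    ∀ θ' ∈ Θ, ∀ θ, IsProperMeta I RM F θ → metaDom I RM F θ θ' → θ ∈ Θ

/-- `M_R`: the stable matching whose rotation set is `R` (via definite description). -/
def MofR (I : SchoolInstance A B) (RM : Matching I → Set (Rot A B))
    (R : Set (Rot A B)) : Matching I :=
  Classical.epsilon fun M => Stable I M ∧ RM M = R

/-- `R^θ = θ₀^F ∪ ⋃ {θ' proper : θ' ⊵^F θ}`. -/
def Rup (I : SchoolInstance A B) (RM : Matching I → Set (Rot A B))
    (F : Set (Matching I)) (θ : Set (Rot A B)) : Set (Rot A B) :=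
  theta0 I RM F ∪ ⋃₀ {θ' | IsProperMeta I RM F θ' ∧ metaDom I RM F θ' θ}

/-- `R_θ = θ₀^F ∪ ⋃ {θ' proper : θ' ▷^F θ}`. -/
def Rdn (I : SchoolInstance A B) (RM : Matching I → Set (Rot A B))
    (F : Set (Matching I)) (θ : Set (Rot A B)) : Set (Rot A B) :=
  theta0 I RM F ∪ ⋃₀ {θ' | IsProperMeta I RM F θ' ∧ metaDom I RM F θ' θ ∧ θ' ≠ θ}

/-- `M^θ`. -/
def Mup (I : SchoolInstance A B) (RM : Matching I → Set (Rot A B))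
    (F : Set (Matching I)) (θ : Set (Rot A B)) : Matching I :=
  MofR I RM (Rup I RM F θ)

/-- `M_θ`. -/
def Mdn (I : SchoolInstance A B) (RM : Matching I → Set (Rot A B))
    (F : Set (Matching I)) (θ : Set (Rot A B)) : Matching I :=
  MofR I RM (Rdn I RM F θ)

/-- The meet `M ∧ M'` in the lattice of stable matchings (via definite description). -/
def meetM (I : SchoolInstance A B) (M M' : Matching I) : Matching I :=
  Classical.epsilon fun N => IsMeet I M M' N

/-- First order differential `∂f_θ = f(M^θ) − f(M_θ)`. -/
def d1 (I : SchoolInstance A B) (RM : Matching I → Set (Rot A B))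
    (F : Set (Matching I)) (f : Matching I → ℝ) (θ : Set (Rot A B)) : ℝ :=
  f (Mup I RM F θ) - f (Mdn I RM F θ)

/-- Second order differential
`∂²f_{θ,θ'} = f(M^θ ∧ M_{θ'}) + f(M_θ ∧ M^{θ'}) − f(M_θ ∧ M_{θ'}) − f(M^θ ∧ M^{θ'})`. -/
def d2 (I : SchoolInstance A B) (RM : Matching I → Set (Rot A B))
    (F : Set (Matching I)) (f : Matching I → ℝ) (θ θ' : Set (Rot A B)) : ℝ :=
  f (meetM I (Mup I RM F θ) (Mdn I RM F θ')) + f (meetM I (Mdn I RM F θ) (Mup I RM F θ'))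
    - f (meetM I (Mdn I RM F θ) (Mdn I RM F θ')) - f (meetM I (Mup I RM F θ) (Mup I RM F θ'))

/-- The greatest element `M₀^F` of `F` (via definite description). -/
def topF (I : SchoolInstance A B) (F : Set (Matching I)) : Matching I :=
  Classical.epsilon fun N => N ∈ F ∧ ∀ P ∈ F, matGE I N P

/-- Vertices of the digraph: all rotations, plus a source `s` and sink `t`. -/
abbrev Vtx (A B : Type) : Type := Rot A B ⊕ Bool

/-- The source `s`. -/
def srcV : Vtx A B := Sum.inr true

/-- The sink `t`. -/
def tgtV : Vtx A B := Sum.inr false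

/-- The value of the cut `S` for the capacity function `u`: the total capacity
of the arcs leaving `S`. -/
def cutVal (u : Vtx A B → Vtx A B → ℝ≥0∞) (S : Set (Vtx A B)) : ℝ≥0∞ :=
  ∑ p : Vtx A B × Vtx A B, if p.1 ∈ S ∧ p.2 ∉ S then u p.1 p.2 else 0

/-- The `s`-`t` cut `{s} ∪ R`. -/
def cutOf (R : Set (Rot A B)) : Set (Vtx A B) := insert srcV (Sum.inl '' R)

/-- `(u, C)` witnesses minimum cut representability of `Π(f, F)`: for every
`R ⊆ R(I)`, the cut `{s} ∪ R` has finite capacity iff `R` is upper-closed and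
`M_R ∈ F`, and in that case its value is `f(M_R) + C`. -/
def MinCutRepWith (I : SchoolInstance A B) (RM : Matching I → Set (Rot A B))
    (F : Set (Matching I)) (f : Matching I → ℝ)
    (u : Vtx A B → Vtx A B → ℝ≥0∞) (C : ℝ) : Prop :=
  ∀ R : Set (Rot A B), R ⊆ RotSet I →
    ((cutVal u (cutOf R) ≠ ⊤ ↔
        (UpperClosed I RM R ∧ ∃ M, Stable I M ∧ RM M = R ∧ M ∈ F)) ∧
      (∀ M, Stable I M → RM M = R → M ∈ F → (cutVal u (cutOf R)).toReal = f M + C))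

/-- The problem `Π(f, F)` is minimum cut representable. -/
def MinCutRep (I : SchoolInstance A B) (RM : Matching I → Set (Rot A B))
    (F : Set (Matching I)) (f : Matching I → ℝ) : Prop :=
  ∃ u C, MinCutRepWith I RM F f u C

/-- The cut digraph `D^{f,F}` (with representative rotations `rep` and
constant `γ`); capacities of parallel arcs are added. -/
def cutDigraph (I : SchoolInstance A B) (RM : Matching I → Set (Rot A B))
    (F : Set (Matching I)) (f : Matching I → ℝ)
    (rep : Set (Rot A B) → Rot A B) (γ : ℝ) : Vtx A B → Vtx A B → ℝ≥0∞ :=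
  fun x y =>
    (if ∃ θ, IsMetaRot I RM F θ ∧ ∃ r ∈ θ, ∃ r' ∈ θ, r ≠ r' ∧ x = Sum.inl r ∧ y = Sum.inl r'
      then ⊤ else 0)
    + (if ∃ θ θ', IsProperMeta I RM F θ ∧ IsProperMeta I RM F θ' ∧ θ ≠ θ' ∧
          metaDom I RM F θ' θ ∧ x = Sum.inl (rep θ) ∧ y = Sum.inl (rep θ')
        then ⊤ else 0)
    + (∑ θ : Set (Rot A B), ∑ θ' : Set (Rot A B),
        if IsProperMeta I RM F θ ∧ IsProperMeta I RM F θ' ∧ θ ≠ θ' ∧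
            x = Sum.inl (rep θ) ∧ y = Sum.inl (rep θ')
        then ENNReal.ofReal ((1 / 2) * d2 I RM F f θ θ') else 0)
    + (if (theta0 I RM F).Nonempty ∧ x = srcV ∧ y = Sum.inl (rep (theta0 I RM F))
        then ⊤ else 0)
    + (if (thetaZ I RM F).Nonempty ∧ x = Sum.inl (rep (thetaZ I RM F)) ∧ y = tgtV
        then ⊤ else 0)
    + (∑ θ : Set (Rot A B),
        if IsProperMeta I RM F θ ∧ x = Sum.inl (rep θ) ∧ y = tgtV
        then ENNReal.ofReal (d1 I RM F f θ -
          (1 / 2) * (∑ θ' : Set (Rot A B),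
            if IsProperMeta I RM F θ' ∧ θ' ≠ θ then d2 I RM F f θ θ' else 0) + γ)
        else 0)
    + (∑ θ : Set (Rot A B),
        if IsProperMeta I RM F θ ∧ x = srcV ∧ y = Sum.inl (rep θ)
        then ENNReal.ofReal γ else 0)

/-- `b` prefers `S'` to `S''`: every member of `S'` is preferred to every
member of `S'' ∖ S'`. -/
def prefersSet (I : SchoolInstance A B) (b : B) (S' S'' : Set (Option A)) : Prop :=
  ∀ x ∈ S', ∀ y ∈ S'', y ∉ S' → I.prefB b x y

/-- `A(ρ)`: students appearing in `ρ₊`. -/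
def Aof (r : Rot A B) : Set A := {a | ∃ b : B, (some a, some b) ∈ r.1}

/-- `B(ρ)`: schools appearing in `ρ₊`. -/
def Bof (r : Rot A B) : Set B := {b | ∃ a : A, (some a, some b) ∈ r.1}

/-- `ρ₊(b)`: students matched to `b` in `ρ₊`. -/
def rhoPlusB (r : Rot A B) (b : B) : Set A := {a | (some a, some b) ∈ r.1}

/-- `R^ρ = {ρ' : ρ' ⊵ ρ}`. -/
def RupRot (I : SchoolInstance A B) (RM : Matching I → Set (Rot A B))
    (r : Rot A B) : Set (Rot A B) :=
  {r' | r' ∈ RotSet I ∧ domRel I RM r' r}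

/-- `R_ρ = {ρ' : ρ' ▷ ρ}`. -/
def RdnRot (I : SchoolInstance A B) (RM : Matching I → Set (Rot A B))
    (r : Rot A B) : Set (Rot A B) :=
  {r' | r' ∈ RotSet I ∧ strictDom I RM r' r}

/-- `M^ρ`. -/
def MupRot (I : SchoolInstance A B) (RM : Matching I → Set (Rot A B))
    (r : Rot A B) : Matching I :=
  MofR I RM (RupRot I RM r)

/-- `M_ρ`. -/
def MdnRot (I : SchoolInstance A B) (RM : Matching I → Set (Rot A B))
    (r : Rot A B) : Matching I :=
  MofR I RM (RdnRot I RM r)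

/-- First order differential of `f` at a rotation: `∂f_ρ = f(M^ρ) − f(M_ρ)`. -/
def d1Rot (I : SchoolInstance A B) (RM : Matching I → Set (Rot A B))
    (f : Matching I → ℝ) (r : Rot A B) : ℝ :=
  f (MupRot I RM r) - f (MdnRot I RM r)

/-- Second order differential of `f` at a pair of distinct rotations. -/
def d2Rot (I : SchoolInstance A B) (RM : Matching I → Set (Rot A B))
    (f : Matching I → ℝ) (r r' : Rot A B) : ℝ :=
  f (meetM I (MupRot I RM r) (MdnRot I RM r')) + f (meetM I (MdnRot I RM r) (MupRot I RM r'))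
    - f (meetM I (MdnRot I RM r) (MdnRot I RM r'))
    - f (meetM I (MupRot I RM r) (MupRot I RM r'))

/-- The pair `(ρ_in, ρ_out)` characterizes the stable matchings assigning both
siblings `a, ā` to school `b`. -/
def siblingChar (I : SchoolInstance A B) (RM : Matching I → Set (Rot A B))
    (a abar : A) (b : B) (p : Rot A B × Rot A B) : Prop :=
  ∀ M : Matching I, Stable I M →
    ((M.toFun a = some b ∧ M.toFun abar = some b) ↔ (p.1 ∈ RM M ∧ p.2 ∉ RM M))

/-- Some stable matching assigns both `a` and `ā` to `b`. -/
def goodSchool (I : SchoolInstance A B) (a abar : A) (b : B) : Prop :=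
  ∃ M, Stable I M ∧ M.toFun a = some b ∧ M.toFun abar = some b

/-- The pair `(ρ_in(a,ā,b), ρ_out(a,ā,b))` (via definite description). -/
def siblingPair (I : SchoolInstance A B) (RM : Matching I → Set (Rot A B))
    (a abar : A) (b : B) : Rot A B × Rot A B :=
  Classical.epsilon fun p => p.1 ∈ RotSet I ∧ p.2 ∈ RotSet I ∧
    siblingChar I RM a abar b p ∧ strictDom I RM p.1 p.2

/-- `R_in(a, ā)`. -/
def Rin (I : SchoolInstance A B) (RM : Matching I → Set (Rot A B))
    (a abar : A) : Set (Rot A B) :=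
  {r | ∃ b, goodSchool I a abar b ∧ r = (siblingPair I RM a abar b).1}

/-- `R_out(a, ā)`. -/
def Rout (I : SchoolInstance A B) (RM : Matching I → Set (Rot A B))
    (a abar : A) : Set (Rot A B) :=
  {r | ∃ b, goodSchool I a abar b ∧ r = (siblingPair I RM a abar b).2}

/-- The indicator function: `0` when the siblings are matched to the same
school, `1` otherwise. -/
def sibIndicator (I : SchoolInstance A B) (a abar : A) : Matching I → ℝ :=
  fun M => if M.toFun a = M.toFun abar then 0 else 1

end SM

set_option linter.unusedSectionVars false
set_option linter.unusedVariables false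

namespace SM

variable {A B : Type} [Fintype A] [Fintype B] [DecidableEq A] [DecidableEq B]

section Basic

variable (I : SchoolInstance A B)

/-- `x ⪰ₐ y` -/
def pge (a : A) (x y : Option B) : Prop := x = y ∨ I.prefA a x y

variable {I}

lemma pge_refl (a : A) (x : Option B) : pge I a x x := Or.inl rfl

lemma prefA_trans {a : A} {x y z : Option B}
    (h1 : I.prefA a x y) (h2 : I.prefA a y z) : I.prefA a x z :=
  (I.prefA_sto a).trans x y z h1 h2

lemma prefA_irrefl {a : A} {x : Option B} (h : I.prefA a x x) : False :=
  (I.prefA_sto a).irrefl x h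

lemma prefA_asymm {a : A} {x y : Option B} (h1 : I.prefA a x y) (h2 : I.prefA a y x) : False :=
  prefA_irrefl (prefA_trans h1 h2)

lemma prefA_trichotomy (a : A) (x y : Option B) :
    I.prefA a x y ∨ x = y ∨ I.prefA a y x :=
  by have := (I.prefA_sto a).trichotomous x y; tauto

lemma pge_trans {a : A} {x y z : Option B} (h1 : pge I a x y) (h2 : pge I a y z) :
    pge I a x z := by
  rcases h1 with rfl | h1
  · exact h2
  · rcases h2 with rfl | h2
    · exact Or.inr h1
    · exact Or.inr (prefA_trans h1 h2)

lemma pge_antisymm {a : A} {x y : Option B} (h1 : pge I a x y) (h2 : pge I a y x) : x = y := by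
  rcases h1 with rfl | h1
  · rfl
  · rcases h2 with rfl | h2
    · rfl
    · exact absurd (prefA_trans h1 h2) prefA_irrefl

lemma pge_total (a : A) (x y : Option B) : pge I a x y ∨ pge I a y x := by
  rcases prefA_trichotomy a x y with h | rfl | h
  · exact Or.inl (Or.inr h)
  · exact Or.inl (Or.inl rfl)
  · exact Or.inr (Or.inr h)

lemma prefA_of_pge_of_lt {a : A} {x y z : Option B} (h1 : pge I a x y) (h2 : I.prefA a y z) :
    I.prefA a x z := by
  rcases h1 with rfl | h1
  · exact h2
  · exact prefA_trans h1 h2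

lemma prefA_of_lt_of_pge {a : A} {x y z : Option B} (h1 : I.prefA a x y) (h2 : pge I a y z) :
    I.prefA a x z := by
  rcases h2 with rfl | h2
  · exact h1
  · exact prefA_trans h1 h2

lemma prefA_of_ne_pge {a : A} {x y : Option B} (h1 : pge I a x y) (h2 : x ≠ y) :
    I.prefA a x y := h1.resolve_left h2

/-- school-side order facts -/
lemma prefB_trans {b : B} {x y z : Option A}
    (h1 : I.prefB b x y) (h2 : I.prefB b y z) : I.prefB b x z :=
  (I.prefB_sto b).trans x y z h1 h2

lemma prefB_irrefl {b : B} {x : Option A} (h : I.prefB b x x) : False :=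
  (I.prefB_sto b).irrefl x h

lemma prefB_asymm {b : B} {x y : Option A} (h1 : I.prefB b x y) (h2 : I.prefB b y x) : False :=
  prefB_irrefl (prefB_trans h1 h2)

lemma prefB_trichotomy (b : B) (x y : Option A) :
    I.prefB b x y ∨ x = y ∨ I.prefB b y x :=
  by have := (I.prefB_sto b).trichotomous x y; tauto

/-- matchings are determined by their functions -/
lemma Matching.ext' {M N : Matching I} (h : M.toFun = N.toFun) : M = N := by
  cases M; cases N; simpa using h

lemma matGE_iff {M N : Matching I} :
    matGE I M N ↔ ∀ a, pge I a (M.toFun a) (N.toFun a) := Iff.rfl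

lemma matGE_refl (M : Matching I) : matGE I M M := fun a => Or.inl rfl

lemma matGE_trans {M N P : Matching I} (h1 : matGE I M N) (h2 : matGE I N P) :
    matGE I M P := fun a => pge_trans (h1 a) (h2 a)

lemma matGE_antisymm {M N : Matching I} (h1 : matGE I M N) (h2 : matGE I N M) : M = N :=
  Matching.ext' (funext fun a => pge_antisymm (h1 a) (h2 a))

noncomputable instance (I : SchoolInstance A B) : Fintype (Matching I) :=
  Fintype.ofInjective (fun M => M.toFun) (fun M N h => Matching.ext' h)

end Basic

section StabilityHelpers

variable {I : SchoolInstance A B}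

lemma Stable.noPair {M : Matching I} (h : Stable I M) {a : A} {b : B} {x : Option A}
    (hw : I.prefA a (some b) (M.toFun a)) (hx : inPartners I M b x) :
    ¬ I.prefB b (some a) x := fun hp => h.1 ⟨a, b, hw, x, hx, hp⟩

lemma Stable.noStudent {M : Matching I} (h : Stable I M) (a : A) :
    ¬ I.prefA a none (M.toFun a) := fun hp => h.2.1 ⟨a, hp⟩

lemma Stable.noSchool {M : Matching I} (h : Stable I M) {a : A} {b : B}
    (hab : M.toFun a = some b) : ¬ I.prefB b none (some a) := fun hp => h.2.2 ⟨b, a, hab, hp⟩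

/-- if `a` strictly wants `b` at stable `M` and `y ∈ M(b)` then `b` strictly prefers `y`. -/
lemma partner_better {M : Matching I} (h : Stable I M) {a y : A} {b : B}
    (hw : I.prefA a (some b) (M.toFun a)) (hy : M.toFun y = some b) :
    I.prefB b (some y) (some a) := by
  have hne : (some a : Option A) ≠ some y := by
    rintro h'
    obtain rfl : a = y := by injection h'
    rw [hy] at hw; exact prefA_irrefl hw
  have := h.noPair hw (Or.inl ⟨y, rfl, hy⟩)
  rcases prefB_trichotomy b (some a) (some y) with h' | h' | h'
  · exact absurd h' this
  · exact absurd h' hne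
  · exact h'

/-- a student assigned to `b` in some stable matching is preferred by `b` to the outside option -/
lemma some_gt_none {N : Matching I} (hN : Stable I N) {a : A} {b : B}
    (ha : N.toFun a = some b) : I.prefB b (some a) none := by
  rcases prefB_trichotomy b (some a) none with h | h | h
  · exact h
  · exact absurd h (by simp)
  · exact absurd h (hN.noSchool ha)

lemma card_assignedTo_le (M : Matching I) (b : B) : (assignedTo I M b).card ≤ I.q b := by
  refine le_trans (le_of_eq ?_) (M.quota b)
  congr 1
  ext x
  simp [assignedTo]

/-- if `a` strictly wants `b` at stable `M`, and `a` is `b`-acceptable, then `b` is full at `M` -/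
lemma full_of_want {M : Matching I} (h : Stable I M) {a : A} {b : B}
    (hw : I.prefA a (some b) (M.toFun a)) (hacc : I.prefB b (some a) none) :
    (assignedTo I M b).card = I.q b := by
  by_contra hne
  have hsl : hasSlack I M b := lt_of_le_of_ne (card_assignedTo_le M b) hne
  exact h.noPair hw (Or.inr ⟨rfl, hsl⟩) hacc

lemma mem_assignedTo {M : Matching I} {a : A} {b : B} :
    a ∈ assignedTo I M b ↔ M.toFun a = some b := by
  simp [assignedTo]

end StabilityHelpers

end SM
namespace SM

variable {A B : Type} [Fintype A] [Fintype B] [DecidableEq A] [DecidableEq B]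
variable {I : SchoolInstance A B}

section RuralHospitals

/-- the set of matched students -/
noncomputable def matchedSet (M : Matching I) : Finset A :=
  Finset.univ.filter fun a => M.toFun a ≠ none

lemma sum_card_assignedTo (M : Matching I) :
    ∑ c : B, (assignedTo I M c).card = (matchedSet M).card := by
  have H : ∀ x ∈ matchedSet M, M.toFun x ∈ Finset.univ.image (some : B → Option B) := by
    intro x hx
    rw [matchedSet, Finset.mem_filter] at hx
    rcases Option.ne_none_iff_exists'.1 hx.2 with ⟨c, hc⟩
    rw [hc]; exact Finset.mem_image_of_mem _ (Finset.mem_univ c)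
  rw [Finset.card_eq_sum_card_fiberwise H]
  rw [Finset.sum_image
    (f := fun o => (Finset.filter (fun a => M.toFun a = o) (matchedSet M)).card)
    (fun x _ y _ h => by simpa using h)]
  apply Finset.sum_congr rfl
  intro c _
  rw [assignedTo]
  congr 1
  ext x
  constructor
  · intro h
    have h2 := (Finset.mem_filter.1 h).2
    refine Finset.mem_filter.2 ⟨Finset.mem_filter.2 ⟨Finset.mem_univ _, ?_⟩, h2⟩
    rw [matchedSet] at *
    rw [h2]; simp
  · intro h
    exact Finset.mem_filter.2 ⟨Finset.mem_univ _, (Finset.mem_filter.1 h).2⟩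

lemma matchedSet_subset_of_ge {M N : Matching I} (hN : Stable I N) (hge : matGE I M N) :
    matchedSet N ⊆ matchedSet M := by
  intro x hx
  rw [matchedSet, Finset.mem_filter] at hx ⊢
  refine ⟨Finset.mem_univ _, ?_⟩
  intro hMx
  rcases Option.ne_none_iff_exists'.1 hx.2 with ⟨c, hc⟩
  rcases hge x with h | h
  · rw [hMx, hc] at h; cases h
  · rw [hMx] at h; exact hN.noStudent x h

lemma card_le_of_ge {M N : Matching I} (hM : Stable I M) (hN : Stable I N)
    (hge : matGE I M N) (c : B) :
    (assignedTo I M c).card ≤ (assignedTo I N c).card := by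
  by_cases hx : ∃ x, M.toFun x = some c ∧ N.toFun x ≠ some c
  · obtain ⟨x, hxM, hxN⟩ := hx
    have hw : I.prefA x (some c) (N.toFun x) := by
      have h := hge x; rw [hxM] at h
      exact prefA_of_ne_pge h (Ne.symm hxN)
    have hfull := full_of_want hN hw (some_gt_none hM hxM)
    rw [hfull]; exact card_assignedTo_le M c
  · push_neg at hx
    apply Finset.card_le_card
    intro y hy
    rw [mem_assignedTo] at hy ⊢
    exact hx y hy

/-- Rural hospitals, comparable case: each school fills the same number of seats. -/
theorem card_eq_of_ge {M N : Matching I} (hM : Stable I M) (hN : Stable I N)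
    (hge : matGE I M N) (c : B) :
    (assignedTo I M c).card = (assignedTo I N c).card := by
  have hle : ∀ c ∈ Finset.univ, (assignedTo I M c).card ≤ (assignedTo I N c).card :=
    fun c _ => card_le_of_ge hM hN hge c
  have hsum : ∑ c : B, (assignedTo I M c).card = ∑ c : B, (assignedTo I N c).card := by
    have h1 := sum_card_assignedTo M
    have h2 := sum_card_assignedTo N
    have h3 : (matchedSet N).card ≤ (matchedSet M).card :=
      Finset.card_le_card (matchedSet_subset_of_ge hN hge)
    have h4 := Finset.sum_le_sum hle
    omega
  exact ((Finset.sum_eq_sum_iff_of_le hle).1 hsum) c (Finset.mem_univ c)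

end RuralHospitals

end SM
namespace SM

variable {A B : Type} [Fintype A] [Fintype B] [DecidableEq A] [DecidableEq B]
variable {I : SchoolInstance A B}

section Lattice

/-- pointwise best choice -/
noncomputable def joinFun (M N : Matching I) : A → Option B :=
  fun a => if pge I a (M.toFun a) (N.toFun a) then M.toFun a else N.toFun a

/-- pointwise worst choice -/
noncomputable def meetFun (M N : Matching I) : A → Option B :=
  fun a => if pge I a (M.toFun a) (N.toFun a) then N.toFun a else M.toFun a

lemma joinFun_cases (M N : Matching I) (a : A) :
    (joinFun M N a = M.toFun a ∧ meetFun M N a = N.toFun a) ∨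
    (joinFun M N a = N.toFun a ∧ meetFun M N a = M.toFun a) := by
  unfold joinFun meetFun
  split
  · exact Or.inl ⟨rfl, rfl⟩
  · exact Or.inr ⟨rfl, rfl⟩

lemma joinFun_ge_left (M N : Matching I) (a : A) :
    pge I a (joinFun M N a) (M.toFun a) := by
  unfold joinFun; split
  · exact pge_refl _ _
  · next h => exact (pge_total a (M.toFun a) (N.toFun a)).resolve_left h

lemma joinFun_ge_right (M N : Matching I) (a : A) :
    pge I a (joinFun M N a) (N.toFun a) := by
  unfold joinFun; split
  · next h => exact h
  · exact pge_refl _ _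

lemma meetFun_le_left (M N : Matching I) (a : A) :
    pge I a (M.toFun a) (meetFun M N a) := by
  unfold meetFun; split
  · next h => exact h
  · exact pge_refl _ _

lemma meetFun_le_right (M N : Matching I) (a : A) :
    pge I a (N.toFun a) (meetFun M N a) := by
  unfold meetFun; split
  · exact pge_refl _ _
  · next h => exact (pge_total a (M.toFun a) (N.toFun a)).resolve_left h

lemma joinFun_eq_or (M N : Matching I) (a : A) :
    joinFun M N a = M.toFun a ∨ joinFun M N a = N.toFun a :=
  (joinFun_cases M N a).imp And.left And.left

lemma meetFun_eq_or (M N : Matching I) (a : A) :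
    meetFun M N a = M.toFun a ∨ meetFun M N a = N.toFun a :=
  (joinFun_cases M N a).imp And.right And.right |>.symm.imp id id

/-- dichotomy: the join sends each school's roster inside one of the two rosters -/
lemma join_dichotomy {M N : Matching I} (hM : Stable I M) (hN : Stable I N) (c : B) :
    (∀ x, joinFun M N x = some c → M.toFun x = some c) ∨
    (∀ x, joinFun M N x = some c → N.toFun x = some c) := by
  by_contra hcon
  push_neg at hcon
  obtain ⟨⟨a1, hj1, hM1⟩, ⟨a2, hj2, hN2⟩⟩ := hcon
  have hN1 : N.toFun a1 = some c := ((joinFun_eq_or M N a1).resolve_left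
    (by rw [hj1]; exact fun h => hM1 h.symm)).symm.trans hj1
  have hM2 : M.toFun a2 = some c := ((joinFun_eq_or M N a2).resolve_right
    (by rw [hj2]; exact fun h => hN2 h.symm)).symm.trans hj2
  -- a1 wants c at M, a2 wants c at N
  have hw1 : I.prefA a1 (some c) (M.toFun a1) := by
    have := joinFun_ge_left M N a1; rw [hj1] at this
    exact prefA_of_ne_pge this (fun h => hM1 h.symm)
  have hw2 : I.prefA a2 (some c) (N.toFun a2) := by
    have := joinFun_ge_right M N a2; rw [hj2] at this
    exact prefA_of_ne_pge this (fun h => hN2 h.symm)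
  exact prefB_asymm (partner_better hM hw1 hM2) (partner_better hN hw2 hN1)

/-- the join as a matching -/
noncomputable def joinMat {M N : Matching I} (hM : Stable I M) (hN : Stable I N) :
    Matching I where
  toFun := joinFun M N
  quota := by
    intro b
    have h2 : ∀ (s : Finset A), (∀ x ∈ s, joinFun M N x = some b) → s.card ≤ I.q b := by
      intro s hs
      rcases join_dichotomy hM hN b with h | h
      · refine le_trans (Finset.card_le_card (fun x hx => ?_)) (card_assignedTo_le M b)
        exact mem_assignedTo.2 (h x (hs x hx))
      · refine le_trans (Finset.card_le_card (fun x hx => ?_)) (card_assignedTo_le N b)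
        exact mem_assignedTo.2 (h x (hs x hx))
    refine h2 _ (fun x hx => ?_)
    simp only [Finset.mem_filter] at hx
    exact hx.2

@[simp] lemma joinMat_toFun {M N : Matching I} (hM : Stable I M) (hN : Stable I N) :
    (joinMat hM hN).toFun = joinFun M N := rfl

lemma joinMat_ge_left {M N : Matching I} (hM : Stable I M) (hN : Stable I N) :
    matGE I (joinMat hM hN) M := fun a => joinFun_ge_left M N a

lemma joinMat_ge_right {M N : Matching I} (hM : Stable I M) (hN : Stable I N) :
    matGE I (joinMat hM hN) N := fun a => joinFun_ge_right M N a

end Lattice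

end SM
namespace SM

variable {A B : Type} [Fintype A] [Fintype B] [DecidableEq A] [DecidableEq B]
variable {I : SchoolInstance A B}

section LatticeCards

variable {M0 : Matching I}

/-- all stable matchings fill each school identically -/
lemma card_stable (hM0s : Stable I M0) (htop : ∀ P, Stable I P → matGE I M0 P)
    {P : Matching I} (hP : Stable I P) (c : B) :
    (assignedTo I P c).card = (assignedTo I M0 c).card :=
  (card_eq_of_ge hM0s hP (htop P hP) c).symm

lemma mem_assignedTo_join {M N : Matching I} (hM : Stable I M) (hN : Stable I N)
    {x : A} {c : B} :
    x ∈ assignedTo I (joinMat hM hN) c ↔ joinFun M N x = some c := mem_assignedTo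

/-- the join fills each school exactly as much as its parts -/
lemma join_card (hM0s : Stable I M0) (htop : ∀ P, Stable I P → matGE I M0 P)
    {M N : Matching I} (hM : Stable I M) (hN : Stable I N) (c : B) : (assignedTo I (joinMat hM hN) c).card = (assignedTo I M c).card := by
  have hkM : ∀ c : B, (assignedTo I M c).card = (assignedTo I M0 c).card :=
    card_stable hM0s htop hM
  have hkN : ∀ c : B, (assignedTo I N c).card = (assignedTo I M0 c).card :=
    card_stable hM0s htop hN
  -- pointwise bound
  have hle : ∀ c ∈ Finset.univ,
      (assignedTo I (joinMat hM hN) c).card ≤ (assignedTo I M0 c).card := by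
    intro c _
    rcases join_dichotomy hM hN c with h | h
    · rw [← hkM c]
      apply Finset.card_le_card
      intro x hx
      exact mem_assignedTo.2 (h x (mem_assignedTo.1 hx))
    · rw [← hkN c]
      apply Finset.card_le_card
      intro x hx
      exact mem_assignedTo.2 (h x (mem_assignedTo.1 hx))
  -- matched set of join contains matched set of M
  have hmat : matchedSet M ⊆ matchedSet (joinMat hM hN) := by
    intro x hx
    rw [matchedSet, Finset.mem_filter] at hx ⊢
    refine ⟨Finset.mem_univ _, ?_⟩
    intro hj
    have hj' : joinFun M N x = none := hj
    rcases joinFun_eq_or M N x with h | h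
    · rw [hj'] at h; exact hx.2 h.symm
    · -- join x = N x = none, but join ⪰ M x ≠ none
      have hge := joinFun_ge_left M N x
      rw [hj'] at hge
      rcases hge with h' | h'
      · exact hx.2 h'.symm
      · exact hM.noStudent x h'
  have hsum1 := sum_card_assignedTo (joinMat hM hN)
  have hsum2 := sum_card_assignedTo M
  have hsum3 : ∑ c : B, (assignedTo I M c).card = ∑ c : B, (assignedTo I M0 c).card :=
    Finset.sum_congr rfl (fun c _ => hkM c)
  have hcard : (matchedSet M).card ≤ (matchedSet (joinMat hM hN)).card :=
    Finset.card_le_card hmat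
  have hsle := Finset.sum_le_sum hle
  have hsums : ∑ c : B, (assignedTo I (joinMat hM hN) c).card
      = ∑ c : B, (assignedTo I M0 c).card := by omega
  have := (Finset.sum_eq_sum_iff_of_le hle).1 hsums c (Finset.mem_univ c)
  rw [this, hkM c]

/-- the join is stable -/
lemma join_stable (hM0s : Stable I M0) (htop : ∀ P, Stable I P → matGE I M0 P)
    {M N : Matching I} (hM : Stable I M) (hN : Stable I N) :
    Stable I (joinMat hM hN) := by
  refine ⟨?_, ?_, ?_⟩
  · rintro ⟨a, c, hw, x, hin, hp⟩
    -- a wants c at both M and N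
    have hwM : I.prefA a (some c) (M.toFun a) :=
      prefA_of_lt_of_pge hw (joinFun_ge_left M N a)
    have hwN : I.prefA a (some c) (N.toFun a) :=
      prefA_of_lt_of_pge hw (joinFun_ge_right M N a)
    rcases hin with ⟨y, rfl, hy⟩ | ⟨rfl, hsl⟩
    · -- student witness
      rcases join_dichotomy hM hN c with h | h
      · exact prefB_asymm hp (partner_better hM hwM (h y hy))
      · exact prefB_asymm hp (partner_better hN hwN (h y hy))
    · -- slack witness: join is as full as M, but M must be full
      have hfull := full_of_want hM hwM hp
      have hjc := join_card hM0s htop hM hN c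
      rw [hasSlack] at hsl
      omega
  · rintro ⟨a, hp⟩
    have hp' : I.prefA a none (joinFun M N a) := hp
    rcases joinFun_eq_or M N a with h | h
    · rw [h] at hp'; exact hM.noStudent a hp'
    · rw [h] at hp'; exact hN.noStudent a hp'
  · rintro ⟨c, a, hac, hp⟩
    have hac' : joinFun M N a = some c := hac
    rcases joinFun_eq_or M N a with h | h
    · rw [h] at hac'; exact hM.noSchool hac' hp
    · rw [h] at hac'; exact hN.noSchool hac' hp

end LatticeCards

end SM
namespace SM

variable {A B : Type} [Fintype A] [Fintype B] [DecidableEq A] [DecidableEq B]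
variable {I : SchoolInstance A B}

section Meet

lemma meetFun_comm (M N : Matching I) : meetFun M N = meetFun N M := by
  funext a
  unfold meetFun
  rcases prefA_trichotomy (I := I) a (M.toFun a) (N.toFun a) with h | h | h
  · rw [if_pos (show pge I a (M.toFun a) (N.toFun a) from Or.inr h),
      if_neg (show ¬ pge I a (N.toFun a) (M.toFun a) from ?_)]
    intro h'
    rcases h' with h' | h'
    · rw [h'] at h; exact prefA_irrefl h
    · exact prefA_asymm h h'
  · rw [if_pos (show pge I a (M.toFun a) (N.toFun a) from Or.inl h),
      if_pos (show pge I a (N.toFun a) (M.toFun a) from Or.inl h.symm), h]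
  · rw [if_neg (show ¬ pge I a (M.toFun a) (N.toFun a) from ?_),
      if_pos (show pge I a (N.toFun a) (M.toFun a) from Or.inr h)]
    intro h'
    rcases h' with h' | h'
    · rw [h'] at h; exact prefA_irrefl h
    · exact prefA_asymm h h'

lemma joinFun_eq_right {M N : Matching I} {a : A}
    (h : I.prefA a (N.toFun a) (M.toFun a)) : joinFun M N a = N.toFun a := by
  rcases joinFun_eq_or M N a with h' | h'
  · exfalso
    have := joinFun_ge_right M N a
    rw [h'] at this
    exact prefA_irrefl (prefA_of_pge_of_lt this h)
  · exact h'

lemma joinFun_eq_left {M N : Matching I} {a : A}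
    (h : I.prefA a (M.toFun a) (N.toFun a)) : joinFun M N a = M.toFun a := by
  rcases joinFun_eq_or M N a with h' | h'
  · exact h'
  · exfalso
    have := joinFun_ge_left M N a
    rw [h'] at this
    exact prefA_irrefl (prefA_of_pge_of_lt this h)

lemma meetFun_eq_right {M N : Matching I} {a : A}
    (h : I.prefA a (M.toFun a) (N.toFun a)) : meetFun M N a = N.toFun a := by
  rcases meetFun_eq_or M N a with h' | h'
  · exfalso
    have := meetFun_le_right M N a
    rw [h'] at this
    exact prefA_irrefl (prefA_of_lt_of_pge h this)
  · exact h'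

lemma meetFun_eq_left {M N : Matching I} {a : A}
    (h : I.prefA a (N.toFun a) (M.toFun a)) : meetFun M N a = M.toFun a := by
  rcases meetFun_eq_or M N a with h' | h'
  · exact h'
  · exfalso
    have := meetFun_le_left M N a
    rw [h'] at this
    exact prefA_irrefl (prefA_of_lt_of_pge h this)

/-- counting identity: `|M(c)| + |N(c)| = |(M∨N)(c)| + |(M∧N)(c)|` -/
lemma card_join_add_meet {M N : Matching I} (hM : Stable I M) (hN : Stable I N) (c : B) :
    (assignedTo I M c).card + (assignedTo I N c).card
      = (assignedTo I (joinMat hM hN) c).card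
        + (Finset.univ.filter fun a => meetFun M N a = some c).card := by
  unfold assignedTo
  rw [Finset.card_filter, Finset.card_filter, Finset.card_filter, Finset.card_filter,
    ← Finset.sum_add_distrib, ← Finset.sum_add_distrib]
  apply Finset.sum_congr rfl
  intro a _
  have hJ : (joinMat hM hN).toFun a = joinFun M N a := rfl
  rcases joinFun_cases M N a with ⟨h1, h2⟩ | ⟨h1, h2⟩ <;>
    simp only [hJ, h1, h2] <;> omega

/-- the meet as a matching -/
noncomputable def meetMat {M0 : Matching I} (hM0s : Stable I M0)
    (htop : ∀ P, Stable I P → matGE I M0 P)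
    {M N : Matching I} (hM : Stable I M) (hN : Stable I N) :
    Matching I where
  toFun := meetFun M N
  quota := by
    intro b
    have key := card_join_add_meet hM hN b
    have hjc := join_card hM0s htop hM hN b
    have hNle := card_assignedTo_le N b
    have hbridge : (Finset.univ.filter fun a => meetFun M N a = some b).card
        ≤ I.q b := by omega
    refine le_trans (le_of_eq ?_) hbridge
    congr 1
    exact Finset.filter_congr_decidable ..

lemma meetMat_toFun {M0 : Matching I} (hM0s : Stable I M0)
    (htop : ∀ P, Stable I P → matGE I M0 P)
    {M N : Matching I} (hM : Stable I M) (hN : Stable I N) :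
    (meetMat hM0s htop hM hN).toFun = meetFun M N := rfl

lemma meet_card {M0 : Matching I} (hM0s : Stable I M0)
    (htop : ∀ P, Stable I P → matGE I M0 P)
    {M N : Matching I} (hM : Stable I M) (hN : Stable I N) (c : B) :
    (assignedTo I (meetMat hM0s htop hM hN) c).card = (assignedTo I N c).card := by
  have key := card_join_add_meet hM hN c
  have hjc := join_card hM0s htop hM hN c
  have hbridge : (assignedTo I (meetMat hM0s htop hM hN) c).card
      = (Finset.univ.filter fun a => meetFun M N a = some c).card := by
    unfold assignedTo
    congr 1
  omega

end Meet

end SM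
namespace SM

variable {A B : Type} [Fintype A] [Fintype B] [DecidableEq A] [DecidableEq B]
variable {I : SchoolInstance A B}

section MeetStable

variable {M0 : Matching I}

/-- no blocking pair of the meet with a student witness, asymmetric form -/
lemma meet_block_aux (hM0s : Stable I M0) (htop : ∀ P, Stable I P → matGE I M0 P)
    {M N : Matching I} (hM : Stable I M) (hN : Stable I N) {x y : A} {c : B}
    (hw : I.prefA x (some c) (M.toFun x))
    (hy : meetFun M N y = some c)
    (hp : I.prefB c (some x) (some y)) : False := by
  by_cases hyM : M.toFun y = some c
  · exact prefB_asymm hp (partner_better hM hw hyM)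
  · -- y is assigned to c by N, and strictly above c in M
    have hyN : N.toFun y = some c := by
      rcases meetFun_eq_or M N y with h | h
      · rw [hy] at h; exact absurd h.symm hyM
      · rw [← h, hy]
    have hyMgt : I.prefA y (M.toFun y) (some c) := by
      have h0 := meetFun_le_left M N y
      rw [hy] at h0
      exact prefA_of_ne_pge h0 hyM
    by_cases hwN : I.prefA x (some c) (N.toFun x)
    · exact prefB_asymm hp (partner_better hN hwN hyN)
    · -- x is weakly above c in N; find the replacement student z
      set J := joinMat hM hN with hJdef
      have hyJ : y ∉ assignedTo I J c := by
        rw [mem_assignedTo]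
        intro hcon
        have h1 : pge I y (J.toFun y) (M.toFun y) := joinMat_ge_left hM hN y
        rw [hcon] at h1
        exact prefA_irrefl (prefA_of_pge_of_lt h1 hyMgt)
      have hcards : (assignedTo I J c).card = (assignedTo I N c).card := by
        rw [join_card hM0s htop hM hN c, card_stable hM0s htop hM c,
          ← card_stable hM0s htop hN c]
      have hnotsub : ¬ assignedTo I J c ⊆ assignedTo I N c := by
        intro hsub
        have heq := Finset.eq_of_subset_of_card_le hsub (le_of_eq hcards.symm)
        rw [heq] at hyJ
        exact hyJ (mem_assignedTo.2 hyN)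
      obtain ⟨z, hzJ, hzN⟩ := Finset.not_subset.1 hnotsub
      rw [mem_assignedTo] at hzJ hzN
      -- z is assigned to c by M and wants c at N
      have hzM : M.toFun z = some c := by
        rcases joinFun_eq_or M N z with h | h
        · rw [← h]; exact hzJ
        · rw [← h] at hzN; exact absurd hzJ hzN
      have hzw : I.prefA z (some c) (N.toFun z) := by
        have h1 : pge I z (J.toFun z) (N.toFun z) := joinMat_ge_right hM hN z
        rw [hzJ] at h1
        exact prefA_of_ne_pge h1 (fun h => hzN h.symm)
      have h1 : I.prefB c (some y) (some z) := partner_better hN hzw hyN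
      have h2 : I.prefB c (some z) (some x) := partner_better hM hw hzM
      exact prefB_irrefl (prefB_trans (prefB_trans h1 h2) hp)

/-- the meet is stable -/
lemma meet_stable (hM0s : Stable I M0) (htop : ∀ P, Stable I P → matGE I M0 P)
    {M N : Matching I} (hM : Stable I M) (hN : Stable I N) :
    Stable I (meetMat hM0s htop hM hN) := by
  refine ⟨?_, ?_, ?_⟩
  · rintro ⟨x, c, hw, w, hin, hp⟩
    have hw' : I.prefA x (some c) (meetFun M N x) := hw
    rcases hin with ⟨y, rfl, hy⟩ | ⟨rfl, hsl⟩
    · -- student witness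
      have hy' : meetFun M N y = some c := hy
      rcases meetFun_eq_or M N x with h | h
      · exact meet_block_aux hM0s htop hM hN (h ▸ hw') hy' hp
      · refine meet_block_aux hM0s htop hN hM (h ▸ hw') ?_ hp
        rw [meetFun_comm]; exact hy'
    · -- slack witness: the meet is as full as M and N
      rw [hasSlack] at hsl
      have hc1 := meet_card hM0s htop hM hN c
      have hc2 : (assignedTo I N c).card = (assignedTo I M c).card := by
        rw [card_stable hM0s htop hN c, ← card_stable hM0s htop hM c]
      rcases meetFun_eq_or M N x with h | h
      · have hfull := full_of_want hM (h ▸ hw') hp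
        omega
      · have hfull := full_of_want hN (h ▸ hw') hp
        omega
  · rintro ⟨a, hp⟩
    have hp' : I.prefA a none (meetFun M N a) := hp
    rcases meetFun_eq_or M N a with h | h
    · rw [h] at hp'; exact hM.noStudent a hp'
    · rw [h] at hp'; exact hN.noStudent a hp'
  · rintro ⟨c, a, hac, hp⟩
    have hac' : meetFun M N a = some c := hac
    rcases meetFun_eq_or M N a with h | h
    · rw [h] at hac'; exact hM.noSchool hac' hp
    · rw [h] at hac'; exact hN.noSchool hac' hp

lemma meetMat_le_left (hM0s : Stable I M0) (htop : ∀ P, Stable I P → matGE I M0 P)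
    {M N : Matching I} (hM : Stable I M) (hN : Stable I N) :
    matGE I M (meetMat hM0s htop hM hN) := fun a => meetFun_le_left M N a

lemma meetMat_le_right (hM0s : Stable I M0) (htop : ∀ P, Stable I P → matGE I M0 P)
    {M N : Matching I} (hM : Stable I M) (hN : Stable I N) :
    matGE I N (meetMat hM0s htop hM hN) := fun a => meetFun_le_right M N a

end MeetStable

end SM
namespace SM

variable {A B : Type} [Fintype A] [Fintype B] [DecidableEq A] [DecidableEq B]
variable {I : SchoolInstance A B}

section Chains

/-- structured chains of immediate predecessors -/
inductive ChainD (I : SchoolInstance A B) : Matching I → Matching I → List (Matching I) → Prop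
  | single (M : Matching I) (h : Stable I M) : ChainD I M M [M]
  | cons {X Y Z : Matching I} {l : List (Matching I)} (hXY : ImmPred I Y X)
      (h : ChainD I Y Z l) : ChainD I X Z (X :: l)

/-- the edge rotations of a list of matchings -/
def listRots (I : SchoolInstance A B) : List (Matching I) → Set (Rot A B)
  | X :: Y :: t => {rho I X Y} ∪ listRots I (Y :: t)
  | _ => ∅

lemma listRots_cons₂ (X Y : Matching I) (l : List (Matching I)) :
    listRots I (X :: Y :: l) = {rho I X Y} ∪ listRots I (Y :: l) := rfl

lemma listRots_single (X : Matching I) : listRots I [X] = ∅ := rfl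

lemma ChainD.head_eq {X Z : Matching I} {c : List (Matching I)} (h : ChainD I X Z c) :
    c.head? = some X := by cases h <;> rfl

lemma ChainD.ne_nil {X Z : Matching I} {c : List (Matching I)} (h : ChainD I X Z c) :
    c ≠ [] := by cases h <;> simp

lemma ChainD.stable_start {X Z : Matching I} {c : List (Matching I)} (h : ChainD I X Z c) :
    Stable I X := by
  cases h with
  | single M hM => exact hM
  | cons hXY h => exact hXY.2.1

lemma ChainD.stable_end {X Z : Matching I} {c : List (Matching I)} (h : ChainD I X Z c) :
    Stable I Z := by
  induction h with
  | single M hM => exact hM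
  | cons hXY h ih => exact ih

lemma ChainD.ge_end {X Z : Matching I} {c : List (Matching I)} (h : ChainD I X Z c) :
    matGE I X Z := by
  induction h with
  | single M hM => exact matGE_refl M
  | cons hXY h ih => exact matGE_trans hXY.2.2.1.1 ih

lemma ChainD.stable_mem {X Z : Matching I} {c : List (Matching I)} (h : ChainD I X Z c) :
    ∀ N ∈ c, Stable I N := by
  induction h with
  | single M hM => intro N hN; simp at hN; subst hN; exact hM
  | cons hXY h ih =>
      intro N hN
      rcases List.mem_cons.1 hN with rfl | hN
      · exact hXY.2.1
      · exact ih N hN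

lemma ChainD.getLast_eq {X Z : Matching I} {c : List (Matching I)} (h : ChainD I X Z c) :
    c.getLast? = some Z := by
  induction h with
  | single M hM => rfl
  | cons hXY h ih =>
      rw [List.getLast?_cons, ih]
      cases h <;> simp_all [List.getLast?_cons]

lemma ChainD.chain' {X Z : Matching I} {c : List (Matching I)} (h : ChainD I X Z c) :
    List.Chain' (fun P Q => ImmPred I Q P) c := by
  induction h with
  | single M hM => exact List.isChain_singleton M
  | cons hXY h ih =>
      refine List.isChain_cons.2 ⟨?_, ih⟩
      intro y hy
      rw [h.head_eq] at hy
      cases hy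
      exact hXY

/-- bridge to the `chainTo` of the problem statement -/
lemma ChainD.chainTo {X Z : Matching I} {c : List (Matching I)} (h : ChainD I X Z c) :
    chainTo I X Z c := ⟨h.head_eq, h.getLast_eq, h.stable_mem, h.chain'⟩

lemma chainRots_eq_listRots : ∀ (c : List (Matching I)), chainRots I c = listRots I c := by
  intro c
  match c with
  | [] =>
      ext r
      simp only [chainRots, listRots, Set.mem_setOf_eq, Set.mem_empty_iff_false, iff_false]
      rintro ⟨i, X, Y, hX, hY, hr⟩
      simp at hX
  | [X] =>
      ext r
      simp only [chainRots, listRots, Set.mem_setOf_eq, Set.mem_empty_iff_false, iff_false]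
      rintro ⟨i, P, Q, hP, hQ, hr⟩
      rcases i with _ | i <;> simp at hP hQ
  | X :: Y :: t =>
      have ih := chainRots_eq_listRots (Y :: t)
      ext r
      simp only [listRots_cons₂, Set.mem_union, ← ih, Set.mem_singleton_iff]
      constructor
      · rintro ⟨i, P, Q, hP, hQ, hr⟩
        rcases i with _ | i
        · simp only [List.getElem?_cons_zero, List.getElem?_cons_succ] at hP hQ
          cases hP; cases hQ
          exact Or.inl hr
        · exact Or.inr ⟨i, P, Q, hP, hQ, hr⟩
      · rintro (hr | ⟨i, P, Q, hP, hQ, hr⟩)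
        · exact ⟨0, X, Y, rfl, rfl, hr⟩
        · exact ⟨i + 1, P, Q, hP, hQ, hr⟩

lemma ChainD.append {X Y Z : Matching I} {c d : List (Matching I)}
    (h1 : ChainD I X Y c) (h2 : ChainD I Y Z d) : ChainD I X Z (c ++ d.tail) := by
  induction h1 with
  | single M hM =>
      cases h2 with
      | single M' hM' => exact ChainD.single _ hM'
      | cons hXY h => exact ChainD.cons hXY h
  | cons hXY h ih => exact ChainD.cons hXY (ih h2)

lemma listRots_append {X Y Z : Matching I} {c d : List (Matching I)}
    (h1 : ChainD I X Y c) (h2 : ChainD I Y Z d) :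
    listRots I (c ++ d.tail) = listRots I c ∪ listRots I d := by
  induction h1 with
  | single M hM =>
      cases h2 with
      | single M' hM' => simp [listRots_single]
      | cons hXY h =>
          rename_i Y' Z' l
          rw [show (([M] : List (Matching I)) ++ (M :: l).tail) = M :: l from by simp]
          simp [listRots_single]
  | cons hXY h ih =>
      rename_i X' Y' Z' l
      have hl : ∃ Y'' t, l = Y'' :: t := by
        cases h <;> exact ⟨_, _, rfl⟩
      obtain ⟨Y'', t, rfl⟩ := hl
      have ihr := ih h2
      rw [List.cons_append, listRots_cons₂]
      rw [show (Y'' :: t) ++ d.tail = Y'' :: (t ++ d.tail) from rfl] at ihr ⊢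
      · rcases t with _ | ⟨W, t'⟩
        · -- l = [Y''], so Y'' = Y
          cases h with
          | single M hM =>
              rw [listRots_cons₂, ihr]
              ext x; simp [listRots_single]; try tauto
          | cons h1 h2' => cases h2'
        · rw [listRots_cons₂, ihr, listRots_cons₂]
          ext x; simp; try tauto

/-- decompose a rotation of a chain into an edge -/
lemma listRots_mem {X Z : Matching I} {c : List (Matching I)} (h : ChainD I X Z c)
    {r : Rot A B} (hr : r ∈ listRots I c) :
    ∃ U V, r = rho I U V ∧ ImmPred I V U ∧ matGE I X U ∧ matGE I V Z := by
  induction h with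
  | single M hM => simp [listRots_single] at hr
  | cons hXY h ih =>
      rename_i X' Y' Z' l
      have hl : ∃ Y'' t, l = Y'' :: t := by
        cases h <;> exact ⟨_, _, rfl⟩
      obtain ⟨Y'', t, rfl⟩ := hl
      have hY : Y'' = Y' := by
        have h5 := h.head_eq; simp at h5
        first | exact h5 | exact h5.symm
      subst hY
      rw [listRots_cons₂] at hr
      rcases hr with hr | hr
      · rw [Set.mem_singleton_iff] at hr
        exact ⟨X', Y'', hr, hXY, matGE_refl _, h.ge_end⟩
      · obtain ⟨U, V, h1, h2, h3, h4⟩ := ih hr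
        exact ⟨U, V, h1, h2, matGE_trans hXY.2.2.1.1 h3, h4⟩

end Chains

end SM
namespace SM

variable {A B : Type} [Fintype A] [Fintype B] [DecidableEq A] [DecidableEq B]
variable {I : SchoolInstance A B}

section RhoLemmas

lemma mem_pairsOf_student {M : Matching I} {m : A} {w : Option B} :
    (some m, w) ∈ pairsOf I M ↔ w = M.toFun m := by
  constructor
  · intro h
    rcases (Finset.mem_filter.1 h).2 with ⟨a, ha⟩ | ⟨b, _, hb⟩
    · rw [Prod.ext_iff] at ha
      obtain ⟨h1, h2⟩ := ha
      obtain rfl : m = a := by injection h1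
      exact h2
    · rw [Prod.ext_iff] at hb
      exact absurd hb.1 (by simp)
  · intro h
    exact Finset.mem_filter.2 ⟨Finset.mem_univ _, Or.inl ⟨m, by rw [h]⟩⟩

lemma mem_rho_fst {X Y : Matching I} {m : A} {w : Option B} :
    (some m, w) ∈ (rho I X Y).1 ↔ w = X.toFun m ∧ X.toFun m ≠ Y.toFun m := by
  rw [rho]
  rw [Finset.mem_sdiff, mem_pairsOf_student, mem_pairsOf_student]
  constructor
  · rintro ⟨rfl, h⟩
    exact ⟨rfl, fun hc => h hc⟩
  · rintro ⟨rfl, h⟩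
    exact ⟨rfl, h⟩

lemma mem_rho_snd {X Y : Matching I} {m : A} {w : Option B} :
    (some m, w) ∈ (rho I X Y).2 ↔ w = Y.toFun m ∧ X.toFun m ≠ Y.toFun m := by
  rw [rho]
  rw [Finset.mem_sdiff, mem_pairsOf_student, mem_pairsOf_student]
  constructor
  · rintro ⟨rfl, h⟩
    exact ⟨rfl, fun hc => h hc.symm⟩
  · rintro ⟨rfl, h⟩
    exact ⟨rfl, fun hc => h hc.symm⟩

/-- movers transfer along equal rotations -/
lemma rho_eq_mover {X Y X' Y' : Matching I} {m : A}
    (hr : rho I X Y = rho I X' Y') (hm : X.toFun m ≠ Y.toFun m) :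
    X'.toFun m = X.toFun m ∧ Y'.toFun m = Y.toFun m ∧ X'.toFun m ≠ Y'.toFun m := by
  have h1 : (some m, X.toFun m) ∈ (rho I X Y).1 := mem_rho_fst.2 ⟨rfl, hm⟩
  have h2 : (some m, Y.toFun m) ∈ (rho I X Y).2 := mem_rho_snd.2 ⟨rfl, hm⟩
  rw [hr] at h1 h2
  obtain ⟨e1, hne⟩ := mem_rho_fst.1 h1
  obtain ⟨e2, _⟩ := mem_rho_snd.1 h2
  exact ⟨e1.symm, e2.symm, hne⟩

/-- non-movers transfer along equal rotations -/
lemma rho_eq_unmoved {X Y X' Y' : Matching I} {m : A}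
    (hr : rho I X Y = rho I X' Y') (hm : X.toFun m = Y.toFun m) :
    X'.toFun m = Y'.toFun m := by
  by_contra hc
  obtain ⟨_, _, hne⟩ := rho_eq_mover hr.symm hc
  exact hne hm

lemma matLT_toFun_ne {X Y : Matching I} (h : matLT I Y X) : Y.toFun ≠ X.toFun := h.2

/-- each edge has a mover -/
lemma exists_mover {X Y : Matching I} (h : matLT I Y X) :
    ∃ m, X.toFun m ≠ Y.toFun m := by
  by_contra hc
  push_neg at hc
  exact h.2 (funext fun m => (hc m).symm)

/-- a newly exposed rotation is fresh: it does not lie on any chain above -/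
lemma rho_fresh {M' X Y : Matching I} {c : List (Matching I)}
    (hc : ChainD I M' X c) (hYX : ImmPred I Y X) :
    rho I X Y ∉ listRots I c := by
  intro hr
  obtain ⟨U, V, hrUV, hUV, _, hVX⟩ := listRots_mem hc hr
  obtain ⟨m, hm⟩ := exists_mover hYX.2.2.1
  obtain ⟨e1, e2, hne⟩ := rho_eq_mover hrUV hm
  have h1 : pge I m (V.toFun m) (X.toFun m) := hVX m
  rw [e2] at h1
  have h2 : I.prefA m (X.toFun m) (Y.toFun m) :=
    prefA_of_ne_pge (hYX.2.2.1.1 m) hm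
  exact prefA_irrefl (prefA_of_pge_of_lt h1 h2)

end RhoLemmas

section ChainExistence

/-- between comparable stable matchings there is a maximal chain -/
lemma exists_chainD {M N : Matching I} (hM : Stable I M) (hN : Stable I N)
    (hge : matGE I M N) : ∃ c, ChainD I M N c := by
  suffices H : ∀ (n : ℕ) (M N : Matching I), Stable I M → Stable I N → matGE I M N →
      (Finset.univ.filter fun P => Stable I P ∧ matGE I M P ∧ matGE I P N).card ≤ n →
      ∃ c, ChainD I M N c by
    exact H _ M N hM hN hge le_rfl
  intro n
  induction n with
  | zero =>
      intro M N hM hN hge hcard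
      exfalso
      have : M ∈ Finset.univ.filter fun P => Stable I P ∧ matGE I M P ∧ matGE I P N :=
        Finset.mem_filter.2 ⟨Finset.mem_univ _, hM, matGE_refl M, hge⟩
      have := Finset.card_pos.2 ⟨M, this⟩
      omega
  | succ n ih =>
      intro M N hM hN hge hcard
      by_cases hMN : M = N
      · subst hMN; exact ⟨[M], ChainD.single M hM⟩
      · set T := Finset.univ.filter fun P => Stable I P ∧ matLT I P M ∧ matGE I P N with hT
        have hNT : N ∈ T := by
          refine Finset.mem_filter.2 ⟨Finset.mem_univ _, hN, ⟨hge, ?_⟩, matGE_refl N⟩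
          intro hc
          exact hMN (Matching.ext' hc).symm
        obtain ⟨P, hPT, hPmax⟩ := Finset.exists_max_image T
          (fun P => (Finset.univ.filter fun Q => matGE I P Q).card) ⟨N, hNT⟩
        obtain ⟨hPs, hPlt, hPN⟩ := (Finset.mem_filter.1 hPT).2
        have hPM : ImmPred I P M := by
          refine ⟨hPs, hM, hPlt, ?_⟩
          rintro ⟨M'', hs, hlt1, hlt2⟩
          have hM''T : M'' ∈ T := Finset.mem_filter.2
            ⟨Finset.mem_univ _, hs, hlt2, matGE_trans hlt1.1 hPN⟩
          have hmax := hPmax M'' hM''T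
          have hss : (Finset.univ.filter fun Q => matGE I P Q)
              ⊂ Finset.univ.filter fun Q => matGE I M'' Q := by
            constructor
            · intro Q hQ
              exact Finset.mem_filter.2 ⟨Finset.mem_univ _,
                matGE_trans hlt1.1 (Finset.mem_filter.1 hQ).2⟩
            · intro hsub
              have : M'' ∈ Finset.univ.filter fun Q => matGE I M'' Q :=
                Finset.mem_filter.2 ⟨Finset.mem_univ _, matGE_refl M''⟩
              have h2 := (Finset.mem_filter.1 (hsub this)).2
              exact hlt1.2 (congrArg Matching.toFun (matGE_antisymm h2 hlt1.1))
          have := Finset.card_lt_card hss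
          omega
        have hsub : (Finset.univ.filter fun Q => Stable I Q ∧ matGE I P Q ∧ matGE I Q N)
            ⊂ Finset.univ.filter fun Q => Stable I Q ∧ matGE I M Q ∧ matGE I Q N := by
          constructor
          · intro Q hQ
            obtain ⟨h1, h2, h3⟩ := (Finset.mem_filter.1 hQ).2
            exact Finset.mem_filter.2 ⟨Finset.mem_univ _, h1,
              matGE_trans hPlt.1 h2, h3⟩
          · intro hsub2
            have hMmem : M ∈ Finset.univ.filter
                fun Q => Stable I Q ∧ matGE I M Q ∧ matGE I Q N :=
              Finset.mem_filter.2 ⟨Finset.mem_univ _, hM, matGE_refl M, hge⟩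
            have h2 := (Finset.mem_filter.1 (hsub2 hMmem)).2
            exact hPlt.2 (congrArg Matching.toFun (matGE_antisymm h2.2.1 hPlt.1))
        have hcard2 := Finset.card_lt_card hsub
        obtain ⟨c', hc'⟩ := ih P N hPs hN hPN (by omega)
        exact ⟨M :: c', ChainD.cons hPM hc'⟩

end ChainExistence

end SM
namespace SM

variable {A B : Type} [Fintype A] [Fintype B] [DecidableEq A] [DecidableEq B]
variable {I : SchoolInstance A B}

section RCalc

variable {M0 : Matching I} {RM : Matching I → Set (Rot A B)}

lemma RM_eq_listRots (hRM : ∀ M c, Stable I M → chainTo I M0 M c → RM M = chainRots I c)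
    {X : Matching I} {c : List (Matching I)} (hc : ChainD I M0 X c) :
    RM X = listRots I c := by
  rw [hRM X c hc.stable_end hc.chainTo, chainRots_eq_listRots]

lemma R_mono (hM0s : Stable I M0) (htop : ∀ N, Stable I N → matGE I M0 N)
    (hRM : ∀ M c, Stable I M → chainTo I M0 M c → RM M = chainRots I c)
    {M N : Matching I} (hM : Stable I M) (hN : Stable I N) (hge : matGE I M N) :
    RM M ⊆ RM N := by
  obtain ⟨c1, hc1⟩ := exists_chainD hM0s hM (htop M hM)
  obtain ⟨c2, hc2⟩ := exists_chainD hM hN hge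
  have h1 := RM_eq_listRots hRM (hc1.append hc2)
  rw [listRots_append hc1 hc2] at h1
  rw [RM_eq_listRots hRM hc1, h1]
  exact Set.subset_union_left

lemma R_step (hM0s : Stable I M0) (htop : ∀ N, Stable I N → matGE I M0 N)
    (hRM : ∀ M c, Stable I M → chainTo I M0 M c → RM M = chainRots I c)
    {X Y : Matching I} (hYX : ImmPred I Y X) :
    RM Y = RM X ∪ {rho I X Y} ∧ rho I X Y ∉ RM X := by
  obtain ⟨c, hc⟩ := exists_chainD hM0s hYX.2.1 (htop X hYX.2.1)
  have hd : ChainD I X Y [X, Y] := ChainD.cons hYX (ChainD.single Y hYX.1)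
  have happ := hc.append hd
  have h1 := RM_eq_listRots hRM happ
  rw [listRots_append hc hd] at h1
  have h2 := RM_eq_listRots hRM hc
  constructor
  · rw [h1, h2]
    congr 1
    rw [listRots_cons₂, listRots_single]
    simp
  · rw [h2]
    exact rho_fresh hc hYX

/-- decomposition of `RM N` and `RM Mz` along a chain through `N` -/
lemma R_through (hM0s : Stable I M0) (htop : ∀ N, Stable I N → matGE I M0 N)
    (hRM : ∀ M c, Stable I M → chainTo I M0 M c → RM M = chainRots I c)
    {Mz N : Matching I} (hMzs : Stable I Mz) (hbot : ∀ P, Stable I P → matGE I P Mz)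
    (hN : Stable I N) :
    ∃ c1 c2, ChainD I M0 N c1 ∧ ChainD I N Mz c2 ∧ RM N = listRots I c1 ∧
      RM Mz = listRots I c1 ∪ listRots I c2 := by
  obtain ⟨c1, hc1⟩ := exists_chainD hM0s hN (htop N hN)
  obtain ⟨c2, hc2⟩ := exists_chainD hN hMzs (hbot N hN)
  refine ⟨c1, c2, hc1, hc2, RM_eq_listRots hRM hc1, ?_⟩
  rw [RM_eq_listRots hRM (hc1.append hc2), listRots_append hc1 hc2]

end RCalc

end SM
namespace SM

variable {A B : Type} [Fintype A] [Fintype B] [DecidableEq A] [DecidableEq B]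
variable {I : SchoolInstance A B}

section EntryExit

variable {M0 : Matching I}

lemma exists_diff {X Y : Matching I} {b : B}
    (hcard : (assignedTo I X b).card = (assignedTo I Y b).card) {t : A}
    (ht : X.toFun t = some b) (ht2 : Y.toFun t ≠ some b) :
    ∃ l, Y.toFun l = some b ∧ X.toFun l ≠ some b := by
  by_contra hc
  push_neg at hc
  have hsub : assignedTo I Y b ⊆ assignedTo I X b := by
    intro l hl
    exact mem_assignedTo.2 (hc l (mem_assignedTo.1 hl))
  have heq := Finset.eq_of_subset_of_card_le hsub (le_of_eq hcard)
  have hmem : t ∈ assignedTo I Y b := by rw [heq]; exact mem_assignedTo.2 ht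
  exact ht2 (mem_assignedTo.1 hmem)

lemma entry_helper (hM0s : Stable I M0) (htop : ∀ N, Stable I N → matGE I M0 N)
    {X Y X' Y' : Matching I}
    (hX : Stable I X) (hY : Stable I Y) (hX' : Stable I X') (hY' : Stable I Y')
    (hgeYX : matGE I Y X) (hr : rho I Y X = rho I Y' X')
    {s t : A} {b : B}
    (hsX : X.toFun s = some b) (hsY : Y.toFun s = some b)
    (htX : X.toFun t = some b) (htmv : Y.toFun t ≠ X.toFun t) :
    X'.toFun s = some b := by
  by_contra hvb
  -- s is unmoved on both edges
  have hs_eq : Y.toFun s = X.toFun s := by rw [hsX, hsY]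
  have hsX' : Y'.toFun s = X'.toFun s := rho_eq_unmoved hr hs_eq
  -- the mover l out of b
  have hYt : Y.toFun t ≠ some b := by rw [← htX]; exact htmv
  have hcardXY : (assignedTo I X b).card = (assignedTo I Y b).card := by
    rw [card_stable hM0s htop hX b, ← card_stable hM0s htop hY b]
  obtain ⟨l, hlY, hlX⟩ := exists_diff hcardXY htX hYt
  have hlmv : Y.toFun l ≠ X.toFun l := by rw [hlY]; exact fun h => hlX h.symm
  obtain ⟨hlY', hlX', _⟩ := rho_eq_mover hr hlmv
  rw [hlY] at hlY'
  have hl_want_X : I.prefA l (some b) (X.toFun l) := by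
    have h := hgeYX l
    rw [hlY] at h
    exact prefA_of_ne_pge h (fun h' => hlX h'.symm)
  have hl_want_X' : I.prefA l (some b) (X'.toFun l) := by rw [hlX']; exact hl_want_X
  rcases prefA_trichotomy (I := I) s (some b) (X'.toFun s) with hcase | hcase | hcase
  · -- v ≺ b : s wants b at Y', partner l blocks
    have hw : I.prefA s (some b) (Y'.toFun s) := by rw [hsX']; exact hcase
    have hpb : I.prefB b (some s) (some l) := partner_better hX hl_want_X hsX
    exact hY'.noPair hw (Or.inl ⟨l, rfl, hlY'⟩) hpb
  · exact hvb hcase.symm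
  · -- v ≻ b : use the join of X and X'
    have hJs : joinFun X X' s = X'.toFun s := joinFun_eq_right (by rw [hsX]; exact hcase)
    have hJs' : joinFun X X' s ≠ some b := by rw [hJs]; exact hvb
    have hcardJ : (assignedTo I X b).card = (assignedTo I (joinMat hX hX') b).card :=
      (join_card hM0s htop hX hX' b).symm
    obtain ⟨x', hx'J, hx'X⟩ := exists_diff hcardJ hsX
      (by rw [show (joinMat hX hX').toFun s = joinFun X X' s from rfl]; exact hJs')
    have hx'J' : joinFun X X' x' = some b := hx'J
    have hx'X'mem : X'.toFun x' = some b := by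
      rcases joinFun_eq_or X X' x' with h | h
      · exact absurd (show X.toFun x' = some b by rw [← h]; exact hx'J') hx'X
      · rw [← h]; exact hx'J'
    have hx'_want_X : I.prefA x' (some b) (X.toFun x') := by
      have h := joinFun_ge_left X X' x'
      rw [hx'J'] at h
      exact prefA_of_ne_pge h (fun h' => hx'X h'.symm)
    have hx'_unmv : Y.toFun x' = X.toFun x' := by
      by_contra hmv
      obtain ⟨_, e2, _⟩ := rho_eq_mover hr hmv
      rw [e2] at hx'X'mem
      exact hx'X hx'X'mem
    have hx'_want_Y : I.prefA x' (some b) (Y.toFun x') := by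
      rw [hx'_unmv]; exact hx'_want_X
    have h1 : I.prefB b (some l) (some x') := partner_better hY hx'_want_Y hlY
    have h2 : I.prefB b (some x') (some l) := partner_better hX' hl_want_X' hx'X'mem
    exact prefB_asymm h1 h2

/-- Entry invariance: if a rotation takes the pair (a, ā) into a common seat at `b`
somewhere, it does so everywhere. -/
lemma entryE (hM0s : Stable I M0) (htop : ∀ N, Stable I N → matGE I M0 N)
    {X Y X' Y' : Matching I}
    (hX : Stable I X) (hY : Stable I Y) (hX' : Stable I X') (hY' : Stable I Y')
    (hgeYX : matGE I Y X) (hr : rho I Y X = rho I Y' X')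
    {a abar : A} {b : B}
    (hXa : X.toFun a = some b) (hXabar : X.toFun abar = some b)
    (hYnF : ¬(Y.toFun a = some b ∧ Y.toFun abar = some b)) :
    X'.toFun a = some b ∧ X'.toFun abar = some b := by
  by_cases hma : Y.toFun a = X.toFun a
  · -- a unmoved hence ā moves
    have hmabar : Y.toFun abar ≠ X.toFun abar := by
      intro h
      exact hYnF ⟨by rw [hma, hXa], by rw [h, hXabar]⟩
    constructor
    · exact entry_helper hM0s htop hX hY hX' hY' hgeYX hr hXa (by rw [hma, hXa])
        hXabar hmabar
    · obtain ⟨_, e2, _⟩ := rho_eq_mover hr hmabar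
      rw [e2]; exact hXabar
  · by_cases hmabar : Y.toFun abar = X.toFun abar
    · constructor
      · obtain ⟨_, e2, _⟩ := rho_eq_mover hr hma
        rw [e2]; exact hXa
      · exact entry_helper hM0s htop hX hY hX' hY' hgeYX hr hXabar
          (by rw [hmabar, hXabar]) hXa hma
    · obtain ⟨_, e2, _⟩ := rho_eq_mover hr hma
      obtain ⟨_, e2', _⟩ := rho_eq_mover hr hmabar
      exact ⟨by rw [e2]; exact hXa, by rw [e2']; exact hXabar⟩

lemma exit_helper (hM0s : Stable I M0) (htop : ∀ N, Stable I N → matGE I M0 N)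
    {X Y X' Y' : Matching I}
    (hX : Stable I X) (hY : Stable I Y) (hX' : Stable I X') (hY' : Stable I Y')
    (hgeYX : matGE I Y X) (hr : rho I Y X = rho I Y' X')
    {s t : A} {b : B}
    (hsY : Y.toFun s = some b) (hsX : X.toFun s = some b)
    (htY : Y.toFun t = some b) (htmv : Y.toFun t ≠ X.toFun t) :
    Y'.toFun s = some b := by
  by_contra hvb
  have hs_eq : Y.toFun s = X.toFun s := by rw [hsX, hsY]
  have hsX' : Y'.toFun s = X'.toFun s := rho_eq_unmoved hr hs_eq
  obtain ⟨htY', htX', _⟩ := rho_eq_mover hr htmv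
  rw [htY] at htY'
  have htXne : X.toFun t ≠ some b := by rw [← htY]; exact fun h => htmv h.symm
  have ht_want_X : I.prefA t (some b) (X.toFun t) := by
    have h := hgeYX t
    rw [htY] at h
    exact prefA_of_ne_pge h (fun h' => htXne h'.symm)
  have ht_want_X' : I.prefA t (some b) (X'.toFun t) := by rw [htX']; exact ht_want_X
  rcases prefA_trichotomy (I := I) s (some b) (Y'.toFun s) with hcase | hcase | hcase
  · -- v ≺ b : s wants b at Y', partner t blocks
    have hpb : I.prefB b (some s) (some t) := partner_better hX ht_want_X hsX
    exact hY'.noPair hcase (Or.inl ⟨t, rfl, htY'⟩) hpb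
  · exact hvb hcase.symm
  · -- v ≻ b : use the join of Y and Y'
    have hJs : joinFun Y Y' s = Y'.toFun s := joinFun_eq_right (by rw [hsY]; exact hcase)
    have hJs' : joinFun Y Y' s ≠ some b := by rw [hJs]; exact hvb
    have hcardJ : (assignedTo I Y b).card = (assignedTo I (joinMat hY hY') b).card :=
      (join_card hM0s htop hY hY' b).symm
    obtain ⟨z, hzJ, hzY⟩ := exists_diff hcardJ hsY
      (by rw [show (joinMat hY hY').toFun s = joinFun Y Y' s from rfl]; exact hJs')
    have hzJ' : joinFun Y Y' z = some b := hzJ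
    have hzY'mem : Y'.toFun z = some b := by
      rcases joinFun_eq_or Y Y' z with h | h
      · exact absurd (show Y.toFun z = some b by rw [← h]; exact hzJ') hzY
      · rw [← h]; exact hzJ'
    have hz_want_Y : I.prefA z (some b) (Y.toFun z) := by
      have h := joinFun_ge_left Y Y' z
      rw [hzJ'] at h
      exact prefA_of_ne_pge h (fun h' => hzY h'.symm)
    have hz_unmv : Y.toFun z = X.toFun z := by
      by_contra hmv
      obtain ⟨e1, _, _⟩ := rho_eq_mover hr hmv
      rw [e1] at hzY'mem
      exact hzY hzY'mem
    have hzX' : X'.toFun z = some b := by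
      rw [← rho_eq_unmoved hr hz_unmv]; exact hzY'mem
    have h1 : I.prefB b (some t) (some z) := partner_better hY hz_want_Y htY
    have h2 : I.prefB b (some z) (some t) := partner_better hX' ht_want_X' hzX'
    exact prefB_asymm h1 h2

/-- Exit invariance. -/
lemma exitE (hM0s : Stable I M0) (htop : ∀ N, Stable I N → matGE I M0 N)
    {X Y X' Y' : Matching I}
    (hX : Stable I X) (hY : Stable I Y) (hX' : Stable I X') (hY' : Stable I Y')
    (hgeYX : matGE I Y X) (hr : rho I Y X = rho I Y' X')
    {a abar : A} {b : B}
    (hYa : Y.toFun a = some b) (hYabar : Y.toFun abar = some b)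
    (hXnF : ¬(X.toFun a = some b ∧ X.toFun abar = some b)) :
    Y'.toFun a = some b ∧ Y'.toFun abar = some b := by
  by_cases hma : Y.toFun a = X.toFun a
  · have hmabar : Y.toFun abar ≠ X.toFun abar := by
      intro h
      exact hXnF ⟨by rw [← hma, hYa], by rw [← h, hYabar]⟩
    constructor
    · exact exit_helper hM0s htop hX hY hX' hY' hgeYX hr hYa (by rw [← hma, hYa])
        hYabar hmabar
    · obtain ⟨e1, _, _⟩ := rho_eq_mover hr hmabar
      rw [e1]; exact hYabar
  · by_cases hmabar : Y.toFun abar = X.toFun abar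
    · constructor
      · obtain ⟨e1, _, _⟩ := rho_eq_mover hr hma
        rw [e1]; exact hYa
      · exact exit_helper hM0s htop hX hY hX' hY' hgeYX hr hYabar
          (by rw [← hmabar, hYabar]) hYa hma
    · obtain ⟨e1, _, _⟩ := rho_eq_mover hr hma
      obtain ⟨e1', _, _⟩ := rho_eq_mover hr hmabar
      exact ⟨by rw [e1]; exact hYa, by rw [e1']; exact hYabar⟩

end EntryExit

end SM
namespace SM

variable {A B : Type} [Fintype A] [Fintype B] [DecidableEq A] [DecidableEq B]
variable {I : SchoolInstance A B}

section TopBot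

variable {M0 : Matching I}

lemma joinFun_of_eq {M N : Matching I} {a : A} {w : Option B}
    (h1 : M.toFun a = w) (h2 : N.toFun a = w) : joinFun M N a = w := by
  rcases joinFun_eq_or M N a with h | h <;> rw [h] <;> assumption

lemma meetFun_of_eq {M N : Matching I} {a : A} {w : Option B}
    (h1 : M.toFun a = w) (h2 : N.toFun a = w) : meetFun M N a = w := by
  rcases meetFun_eq_or M N a with h | h <;> rw [h] <;> assumption

lemma exists_topF (hM0s : Stable I M0) (htop : ∀ N, Stable I N → matGE I M0 N)
    {a abar : A} {b : B}
    (hgood : ∃ M, Stable I M ∧ M.toFun a = some b ∧ M.toFun abar = some b) :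
    ∃ Mt : Matching I, (Stable I Mt ∧ Mt.toFun a = some b ∧ Mt.toFun abar = some b) ∧
      ∀ N, Stable I N → N.toFun a = some b → N.toFun abar = some b → matGE I Mt N := by
  classical
  set P : Matching I → Prop :=
    fun M => Stable I M ∧ M.toFun a = some b ∧ M.toFun abar = some b with hP
  suffices H : ∀ (n : ℕ) (s : Finset (Matching I)), s.card ≤ n → s.Nonempty →
      (∀ M ∈ s, P M) → ∃ Mt, P Mt ∧ ∀ N ∈ s, matGE I Mt N by
    obtain ⟨M, hM⟩ := hgood
    set s := Finset.univ.filter P with hs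
    have hsne : s.Nonempty := ⟨M, Finset.mem_filter.2 ⟨Finset.mem_univ _, hM⟩⟩
    obtain ⟨Mt, hMt, hMtge⟩ := H s.card s le_rfl hsne
      (fun M hM => (Finset.mem_filter.1 hM).2)
    exact ⟨Mt, hMt, fun N h1 h2 h3 =>
      hMtge N (Finset.mem_filter.2 ⟨Finset.mem_univ _, h1, h2, h3⟩)⟩
  intro n
  induction n with
  | zero =>
      intro s hcard hne _
      exfalso
      have := Finset.card_pos.2 hne
      omega
  | succ n ih =>
      intro s hcard hne hP2
      obtain ⟨x, hx⟩ := hne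
      by_cases hse : (s.erase x).Nonempty
      · obtain ⟨Mt', hMt', hge'⟩ := ih (s.erase x)
          (by have := Finset.card_erase_of_mem hx; omega) hse
          (fun M hM => hP2 M (Finset.mem_of_mem_erase hM))
        have hxP := hP2 x hx
        refine ⟨joinMat hxP.1 hMt'.1, ⟨join_stable hM0s htop hxP.1 hMt'.1,
          joinFun_of_eq hxP.2.1 hMt'.2.1, joinFun_of_eq hxP.2.2 hMt'.2.2⟩, ?_⟩
        intro N hN
        by_cases hNx : N = x
        · subst hNx; exact joinMat_ge_left hxP.1 hMt'.1
        · exact matGE_trans (joinMat_ge_right hxP.1 hMt'.1)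
            (hge' N (Finset.mem_erase.2 ⟨hNx, hN⟩))
      · have hxP := hP2 x hx
        refine ⟨x, hxP, ?_⟩
        intro N hN
        by_cases hNx : N = x
        · subst hNx; exact matGE_refl N
        · exact absurd ⟨N, Finset.mem_erase.2 ⟨hNx, hN⟩⟩ hse

lemma exists_botF (hM0s : Stable I M0) (htop : ∀ N, Stable I N → matGE I M0 N)
    {a abar : A} {b : B}
    (hgood : ∃ M, Stable I M ∧ M.toFun a = some b ∧ M.toFun abar = some b) :
    ∃ Mb : Matching I, (Stable I Mb ∧ Mb.toFun a = some b ∧ Mb.toFun abar = some b) ∧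
      ∀ N, Stable I N → N.toFun a = some b → N.toFun abar = some b → matGE I N Mb := by
  classical
  set P : Matching I → Prop :=
    fun M => Stable I M ∧ M.toFun a = some b ∧ M.toFun abar = some b with hP
  suffices H : ∀ (n : ℕ) (s : Finset (Matching I)), s.card ≤ n → s.Nonempty →
      (∀ M ∈ s, P M) → ∃ Mb, P Mb ∧ ∀ N ∈ s, matGE I N Mb by
    obtain ⟨M, hM⟩ := hgood
    set s := Finset.univ.filter P with hs
    have hsne : s.Nonempty := ⟨M, Finset.mem_filter.2 ⟨Finset.mem_univ _, hM⟩⟩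
    obtain ⟨Mb, hMb, hMbge⟩ := H s.card s le_rfl hsne
      (fun M hM => (Finset.mem_filter.1 hM).2)
    exact ⟨Mb, hMb, fun N h1 h2 h3 =>
      hMbge N (Finset.mem_filter.2 ⟨Finset.mem_univ _, h1, h2, h3⟩)⟩
  intro n
  induction n with
  | zero =>
      intro s hcard hne _
      exfalso
      have := Finset.card_pos.2 hne
      omega
  | succ n ih =>
      intro s hcard hne hP2
      obtain ⟨x, hx⟩ := hne
      by_cases hse : (s.erase x).Nonempty
      · obtain ⟨Mb', hMb', hge'⟩ := ih (s.erase x)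
          (by have := Finset.card_erase_of_mem hx; omega) hse
          (fun M hM => hP2 M (Finset.mem_of_mem_erase hM))
        have hxP := hP2 x hx
        refine ⟨meetMat hM0s htop hxP.1 hMb'.1, ⟨meet_stable hM0s htop hxP.1 hMb'.1,
          meetFun_of_eq hxP.2.1 hMb'.2.1, meetFun_of_eq hxP.2.2 hMb'.2.2⟩, ?_⟩
        intro N hN
        by_cases hNx : N = x
        · subst hNx; exact meetMat_le_left hM0s htop hxP.1 hMb'.1
        · exact matGE_trans (hge' N (Finset.mem_erase.2 ⟨hNx, hN⟩))
            (meetMat_le_right hM0s htop hxP.1 hMb'.1)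
      · have hxP := hP2 x hx
        refine ⟨x, hxP, ?_⟩
        intro N hN
        by_cases hNx : N = x
        · subst hNx; exact matGE_refl N
        · exact absurd ⟨N, Finset.mem_erase.2 ⟨hNx, hN⟩⟩ hse

/-- last edge of a nontrivial chain -/
lemma ChainD.last_edge {X Z : Matching I} {c : List (Matching I)}
    (h : ChainD I X Z c) (hne : X ≠ Z) : ∃ Y, ImmPred I Z Y := by
  induction h with
  | single M hM => exact absurd rfl hne
  | cons hXY h ih =>
      rename_i X' Y' Z' l
      by_cases hYZ : Y' = Z'
      · subst hYZ; exact ⟨X', hXY⟩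
      · exact ih hYZ

/-- first edge of a nontrivial chain -/
lemma ChainD.first_edge {X Z : Matching I} {c : List (Matching I)}
    (h : ChainD I X Z c) (hne : X ≠ Z) : ∃ W, ImmPred I W X := by
  cases h with
  | single M hM => exact absurd rfl hne
  | cons hXY h => exact ⟨_, hXY⟩

end TopBot

end SM
namespace SM

variable {A B : Type} [Fintype A] [Fintype B] [DecidableEq A] [DecidableEq B]

/-- the rotations governing the assignment of a pair of siblings
to a common school. -/
theorem stmt16 (I : SchoolInstance A B) (M0 Mz : Matching I)
    (hM0 : Stable I M0 ∧ ∀ N, Stable I N → matGE I M0 N)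
    (hMz : Stable I Mz ∧ ∀ N, Stable I N → matGE I N Mz)
    (RM : Matching I → Set (Rot A B))
    (hRM : ∀ M c, Stable I M → chainTo I M0 M c → RM M = chainRots I c)
    (a abar : A) (hne : a ≠ abar)
    (h0 : M0.toFun a ≠ M0.toFun abar) (hz : Mz.toFun a ≠ Mz.toFun abar) (b : B) :
    Xor' (¬ ∃ M, Stable I M ∧ M.toFun a = some b ∧ M.toFun abar = some b)
      ((∃! p : Rot A B × Rot A B,
          p.1 ∈ RotSet I ∧ p.2 ∈ RotSet I ∧ siblingChar I RM a abar b p) ∧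
        (∀ p : Rot A B × Rot A B, p.1 ∈ RotSet I → p.2 ∈ RotSet I →
          siblingChar I RM a abar b p → strictDom I RM p.1 p.2)) := by
  classical
  obtain ⟨hM0s, htop⟩ := hM0
  obtain ⟨hMzs, hbot⟩ := hMz
  by_cases hgood : ∃ M, Stable I M ∧ M.toFun a = some b ∧ M.toFun abar = some b
  · -- case (2): some stable matching assigns both to b
    refine Or.inr ⟨?_, fun h => h hgood⟩
    -- F is nonempty; build its top and bottom
    have hM0nF : ¬(M0.toFun a = some b ∧ M0.toFun abar = some b) :=
      fun ⟨h1, h2⟩ => h0 (h1.trans h2.symm)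
    have hMznF : ¬(Mz.toFun a = some b ∧ Mz.toFun abar = some b) :=
      fun ⟨h1, h2⟩ => hz (h1.trans h2.symm)
    obtain ⟨Mt, ⟨hMts, hMta, hMtabar⟩, hMtTop⟩ := exists_topF hM0s htop hgood
    obtain ⟨Mb, ⟨hMbs, hMba, hMbabar⟩, hMbBot⟩ := exists_botF hM0s htop hgood
    -- a cover above Mt
    have hM0Mt : M0 ≠ Mt := fun h => hM0nF (h ▸ ⟨hMta, hMtabar⟩)
    obtain ⟨c0, hc0⟩ := exists_chainD hM0s hMts (htop Mt hMts)
    obtain ⟨Y, hYMt⟩ := hc0.last_edge hM0Mt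
    -- a cover below Mb
    have hMbMz : Mb ≠ Mz := fun h => hMznF (h ▸ ⟨hMba, hMbabar⟩)
    obtain ⟨cz, hcz⟩ := exists_chainD hMbs hMzs (hbot Mb hMbs)
    obtain ⟨Z, hZMb⟩ := hcz.first_edge hMbMz
    set rin := rho I Y Mt with hrin
    set rout := rho I Mb Z with hrout
    obtain ⟨hstep_in, hfresh_in⟩ := R_step hM0s htop hRM hYMt
    obtain ⟨hstep_out, hfresh_out⟩ := R_step hM0s htop hRM hZMb
    have hrinRM : rin ∈ RM Mt := by rw [hstep_in]; exact Set.mem_union_right _ rfl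
    have hroutRM : rout ∈ RM Z := by rw [hstep_out]; exact Set.mem_union_right _ rfl
    have hYs : Stable I Y := hYMt.2.1
    have hZs : Stable I Z := hZMb.1
    have hYnF : ¬(Y.toFun a = some b ∧ Y.toFun abar = some b) := by
      rintro ⟨h1, h2⟩
      exact hYMt.2.2.1.2 (congrArg Matching.toFun
        (matGE_antisymm (hMtTop Y hYs h1 h2) hYMt.2.2.1.1))
    have hZnF : ¬(Z.toFun a = some b ∧ Z.toFun abar = some b) := by
      rintro ⟨h1, h2⟩
      exact hZMb.2.2.1.2 (congrArg Matching.toFun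
        (matGE_antisymm (hMbBot Z hZs h1 h2) hZMb.2.2.1.1))
    have hrinRot : rin ∈ RotSet I := ⟨Y, Mt, hYMt, rfl⟩
    have hroutRot : rout ∈ RotSet I := ⟨Mb, Z, hZMb, rfl⟩
    -- the characterization
    have hchar : siblingChar I RM a abar b (rin, rout) := by
      intro N hN
      constructor
      · rintro ⟨hNa, hNabar⟩
        have hgeMtN : matGE I Mt N := hMtTop N hN hNa hNabar
        have hgeNMb : matGE I N Mb := hMbBot N hN hNa hNabar
        constructor
        · exact R_mono hM0s htop hRM hMts hN hgeMtN hrinRM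
        · intro hmem
          exact hfresh_out (R_mono hM0s htop hRM hN hMbs hgeNMb hmem)
      · rintro ⟨hin, hout⟩
        obtain ⟨c1, c2, hc1, hc2, hRN, hRMz⟩ :=
          R_through hM0s htop hRM hMzs hbot hN
        -- rin is somewhere above N
        have hin' : rin ∈ listRots I c1 := by rw [← hRN]; exact hin
        obtain ⟨U, V, hrUV, hUV, _, hVN⟩ := listRots_mem hc1 hin'
        have hVF := entryE hM0s htop hMts hYs hUV.1 hUV.2.1
          hYMt.2.2.1.1 (hrin ▸ hrUV) hMta hMtabar hYnF
        have hgeMtV : matGE I Mt V := hMtTop V hUV.1 hVF.1 hVF.2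
        have hgeMtN : matGE I Mt N := matGE_trans hgeMtV hVN
        -- rout is somewhere below N
        have hroutMz : rout ∈ RM Mz :=
          R_mono hM0s htop hRM hZs hMzs (hbot Z hZs) hroutRM
        have hout2 : rout ∈ listRots I c2 := by
          rw [hRMz] at hroutMz
          rcases hroutMz with h | h
          · exact absurd (hRN ▸ h) hout
          · exact h
        obtain ⟨U', V', hrUV', hUV', hNU', _⟩ := listRots_mem hc2 hout2
        have hUF := exitE hM0s htop hZs hMbs hUV'.1 hUV'.2.1
          hZMb.2.2.1.1 (hrout ▸ hrUV') hMba hMbabar hZnF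
        have hgeNMb : matGE I N Mb :=
          matGE_trans hNU' (hMbBot U' hUV'.2.1 hUF.1 hUF.2)
        constructor
        · have h1 : pge I a (Mt.toFun a) (N.toFun a) := hgeMtN a
          rw [hMta] at h1
          have h2 : pge I a (N.toFun a) (Mb.toFun a) := hgeNMb a
          rw [hMba] at h2
          exact pge_antisymm h2 h1
        · have h1 : pge I abar (Mt.toFun abar) (N.toFun abar) := hgeMtN abar
          rw [hMtabar] at h1
          have h2 : pge I abar (N.toFun abar) (Mb.toFun abar) := hgeNMb abar
          rw [hMbabar] at h2
          exact pge_antisymm h2 h1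
    -- uniqueness of the characterizing pair
    have huniq : ∀ p : Rot A B × Rot A B, p.1 ∈ RotSet I → p.2 ∈ RotSet I →
        siblingChar I RM a abar b p → p = (rin, rout) := by
      intro p hp1 hp2 hcharp
      have hMtiff := (hcharp Mt hMts).1 ⟨hMta, hMtabar⟩
      have hMbiff := (hcharp Mb hMbs).1 ⟨hMba, hMbabar⟩
      have hYiff := (hcharp Y hYs).not.1 hYnF
      have hZiff := (hcharp Z hZs).not.1 hZnF
      have hp1in : p.1 = rin := by
        have hp1notY : p.1 ∉ RM Y := by
          intro hmem
          apply hYiff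
          refine ⟨hmem, ?_⟩
          intro hmem2
          exact hMtiff.2 (R_mono hM0s htop hRM hYs hMts hYMt.2.2.1.1 hmem2)
        have := hMtiff.1
        rw [hstep_in] at this
        rcases this with h | h
        · exact absurd h hp1notY
        · exact h
      have hp2out : p.2 = rout := by
        have hp2Z : p.2 ∈ RM Z := by
          by_contra hmem
          exact hZiff ⟨R_mono hM0s htop hRM hMbs hZs hZMb.2.2.1.1 hMbiff.1, hmem⟩
        rw [hstep_out] at hp2Z
        rcases hp2Z with h | h
        · exact absurd h hMbiff.2
        · exact h
      exact Prod.ext hp1in hp2out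
    refine ⟨⟨(rin, rout), ⟨hrinRot, hroutRot, hchar⟩, ?_⟩, ?_⟩
    · rintro p ⟨hp1, hp2, hcharp⟩
      exact huniq p hp1 hp2 hcharp
    · intro p hp1 hp2 hcharp
      have hpe := huniq p hp1 hp2 hcharp
      rw [hpe]
      have hne : rin ≠ rout := by
        intro h
        have hmem : rin ∈ RM Mb := R_mono hM0s htop hRM hMts hMbs
          (hMbBot Mt hMts hMta hMtabar) hrinRM
        rw [h] at hmem
        exact hfresh_out hmem
      refine ⟨Or.inr ?_, hne⟩
      intro M hM hexp
      obtain ⟨M'', hImm, hrho⟩ := hexp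
      have hrho' : rho I Mb Z = rho I M M'' := hrho
      have hMF := exitE hM0s htop hZs hMbs hImm.1 hImm.2.1
        hZMb.2.2.1.1 hrho' hMba hMbabar hZnF
      exact ((hchar M hM).1 ⟨hMF.1, hMF.2⟩).1
  · -- case (1): no stable matching assigns both to b
    refine Or.inl ⟨hgood, ?_⟩
    rintro ⟨⟨p, ⟨hp1, hp2, hcharp⟩, huniq⟩, hdom⟩
    have hchar' : siblingChar I RM a abar b (p.1, p.1) := by
      intro M hM
      constructor
      · intro hF
        exact absurd ⟨M, hM, hF.1, hF.2⟩ hgood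
      · rintro ⟨h1, h2⟩
        exact absurd h1 h2
    exact (hdom (p.1, p.1) hp1 hp1 hchar').2 rfl


end SM
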